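/- arXiv:math/0612656 — 8 statements merged into one kernel-verified Lean document; each statement's English description precedes it below -/
import Mathlib

section
/- Let n ≥ 2 and let i, j ∈ {1,...,n} be distinct indices. The monomial blowing-up φ_{ij} : ℝ^n → ℝ^n, sending a = (a_1,...,a_n) to the vector whose j-th coordinate is a_i + a_j and whose other coordinates equal those of a, is strictly monotone with respect to the lexicographic order on ℝ^n (i.e. a <_lex b implies φ_{ij}(a) <_lex φ_{ij}(b)) if and only if i < j. -/
noncomputable section

/-- The monomial blowing-up `φ_{ij}` of `ℝ^n` (for distinct `i`, `j`): the `j`-th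
coordinate becomes `a i + a j`, the other coordinates are unchanged. -/
def blowUp (n : ℕ) (i j : Fin n) : (Fin n → ℝ) → (Fin n → ℝ) :=
  fun a l => if l = j then a i + a j else a l

/-- The monomial blowing-down `φ_{ij}⁻¹` of `ℝ^n`, the inverse of `blowUp n i j`. -/
def blowDown (n : ℕ) (i j : Fin n) : (Fin n → ℝ) → (Fin n → ℝ) :=
  fun a l => if l = j then a l - a i else a l

/-- `Φ` is a finite composition of order-preserving monomial blowing-ups `φ_{ij}`, `i < j`. -/
def IsBlowUpComp (n : ℕ) (Φ : (Fin n → ℝ) → (Fin n → ℝ)) : Prop :=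
  ∃ L : List ((Fin n → ℝ) → (Fin n → ℝ)),
    (∀ g ∈ L, ∃ i j : Fin n, i < j ∧ g = blowUp n i j) ∧ Φ = L.foldr (· ∘ ·) id

/-- `Φ` is a finite composition of order-preserving monomial blowing-downs `φ_{ij}⁻¹`, `i < j`. -/
def IsBlowDownComp (n : ℕ) (Φ : (Fin n → ℝ) → (Fin n → ℝ)) : Prop :=
  ∃ L : List ((Fin n → ℝ) → (Fin n → ℝ)),
    (∀ g ∈ L, ∃ i j : Fin n, i < j ∧ g = blowDown n i j) ∧ Φ = L.foldr (· ∘ ·) id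

/-- **(Notations 3(2); cf. [SV2, Proposition 5]).**  For distinct indices `i, j`, the
monomial blowing-up `φ_{ij} : ℝ^n → ℝ^n` is strictly monotone for the lexicographic
order on `ℝ^n` if and only if `i < j`. -/
theorem blowUp_strictMono_lex_iff (n : ℕ) (hn : 2 ≤ n) (i j : Fin n) (hij : i ≠ j) :
    (∀ a b : Fin n → ℝ, toLex a < toLex b →
        toLex (blowUp n i j a) < toLex (blowUp n i j b)) ↔ i < j := by
  constructor
  · intro h
    rcases hij.lt_or_gt with h' | h'
    · exact h'
    · -- j < i : derive a contradiction via a counterexample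
      exfalso
      set a : Fin n → ℝ := fun l => if l = i then 2 else 0 with ha
      set b : Fin n → ℝ := fun l => if l = j then 1 else 0 with hb
      have hab : toLex a < toLex b := by
        refine ⟨j, fun l hl => ?_, ?_⟩
        · have hli : l ≠ i := fun e => absurd (e ▸ hl) (not_lt.2 h'.le)
          have hlj : l ≠ j := hl.ne
          simp [ha, hb, hli, hlj]
        · simp [ha, hb, hij.symm, h'.ne']
      obtain ⟨k, hk, hklt⟩ := h a b hab
      by_cases hkj : k = j
      · subst hkj
        simp [blowUp, ha, hb, hij.symm, h'.ne'] at hklt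
        try linarith
      · by_cases hki : k = i
        · have h2 := hk j (hki ▸ h')
          simp [blowUp, ha, hb, hij.symm, h'.ne'] at h2
          try linarith
        · simp [blowUp, ha, hb, hkj, hki] at hklt
          try linarith
  · intro hlt a b hab
    obtain ⟨k, hk, hklt⟩ := hab
    by_cases hkj : k < j
    · refine ⟨k, fun l hl => ?_, ?_⟩
      · have : l ≠ j := (hl.trans hkj).ne
        simpa [blowUp, this] using hk l hl
      · simpa [blowUp, hkj.ne] using hklt
    · by_cases hkej : k = j
      · subst hkej
        refine ⟨k, fun l hl => ?_, ?_⟩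
        · have : l ≠ k := hl.ne
          simpa [blowUp, this] using hk l hl
        · have hi : a i = b i := hk i hlt
          simp only [Pi.toLex_apply, blowUp, if_pos rfl, hi]
          simp only [if_true]
          have hklt' : a k < b k := hklt
          linarith
      · -- j < k
        have hjk : j < k := lt_of_le_of_ne (not_lt.1 hkj) (Ne.symm hkej)
        refine ⟨k, fun l hl => ?_, ?_⟩
        · by_cases hlj : l = j
          · subst hlj
            have hi : a i = b i := hk i (hlt.trans hjk)
            have hj : a l = b l := hk l hjk
            simp [blowUp, hi, hj]
          · simpa [blowUp, hlj] using hk l hl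
        · simpa [blowUp, hkej] using hklt
end
end

section
/- Let n ≥ 2 and let Λ be a non-empty subset of ℤ_{≥0}^n. Then there exist a finite composition Φ of order-preserving monomial blowing-ups of ℝ^n and a vector a ∈ Φ(Λ) with integer coordinates such that Φ(Λ) ⊆ a + ℤ_{≥0}^n. -/
noncomputable section

/-- ℕ-version of blowUp -/
def bU (n : ℕ) (i j : Fin n) (a : Fin n → ℕ) : Fin n → ℕ :=
  fun l => if l = j then a i + a j else a l

def applyL (n : ℕ) (L : List (Fin n × Fin n)) (a : Fin n → ℕ) : Fin n → ℕ :=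
  L.foldr (fun p v => bU n p.1 p.2 v) a

lemma applyL_nil (n : ℕ) (a : Fin n → ℕ) : applyL n [] a = a := rfl

lemma applyL_cons (n : ℕ) (p : Fin n × Fin n) (L : List (Fin n × Fin n)) (a : Fin n → ℕ) :
    applyL n (p :: L) a = bU n p.1 p.2 (applyL n L a) := rfl

lemma applyL_append (n : ℕ) (L1 L2 : List (Fin n × Fin n)) (a : Fin n → ℕ) :
    applyL n (L1 ++ L2) a = applyL n L1 (applyL n L2 a) := by
  simp [applyL, List.foldr_append]

lemma applyL_mono (n : ℕ) (L : List (Fin n × Fin n)) {a b : Fin n → ℕ}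
    (h : ∀ l, a l ≤ b l) : ∀ l, applyL n L a l ≤ applyL n L b l := by
  induction L with
  | nil => exact h
  | cons p t ih =>
    intro l
    simp only [applyL_cons, bU]
    split
    · exact Nat.add_le_add (ih _) (ih _)
    · exact ih l

lemma applyL_replicate (n : ℕ) (c : ℕ) (i j : Fin n) (hij : i ≠ j) (a : Fin n → ℕ) (l : Fin n) :
    applyL n (List.replicate c (i, j)) a l = if l = j then a l + c * a i else a l := by
  induction c generalizing l with
  | zero => simp [applyL_nil]
  | succ c ih =>
    rw [List.replicate_succ, applyL_cons]
    simp only [bU]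
    by_cases hl : l = j
    · subst hl
      rw [if_pos rfl, if_pos rfl, ih, ih, if_neg hij, if_pos rfl]
      ring
    · rw [if_neg hl, if_neg hl, ih, if_neg hl]

lemma applyL_flat (n : ℕ) (i : Fin n) (K : ℕ) (J : List (Fin n)) (hJ : J.Nodup)
    (hgt : ∀ j ∈ J, i < j) (a : Fin n → ℕ) (l : Fin n) :
    applyL n (J.flatMap fun j => List.replicate K (i, j)) a l
      = if l ∈ J then a l + K * a i else a l := by
  induction J generalizing l with
  | nil => simp [applyL_nil]
  | cons j t ih =>
    have hJt : t.Nodup := hJ.of_cons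
    have hjt : j ∉ t := by simp_all [List.nodup_cons]
    have hgtt : ∀ x ∈ t, i < x := fun x hx => hgt x (List.mem_cons_of_mem _ hx)
    have hij : i ≠ j := (hgt j List.mem_cons_self).ne
    rw [List.flatMap_cons, applyL_append, applyL_replicate n K i j hij]
    have hii : applyL n (t.flatMap fun j => List.replicate K (i, j)) a i = a i := by
      rw [ih hJt hgtt]
      simp only [if_neg (fun h => absurd (hgtt i h) (lt_irrefl i))]
    by_cases hl : l = j
    · subst hl
      rw [if_pos rfl, ih hJt hgtt, if_neg hjt, hii, if_pos List.mem_cons_self]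
    · rw [if_neg hl, ih hJt hgtt]
      by_cases hlt : l ∈ t
      · rw [if_pos hlt, if_pos (List.mem_cons_of_mem _ hlt)]
      · rw [if_neg hlt, if_neg (by simp [hl, hlt])]

/-- Key combinatorial lemma, by downward induction on coordinates. -/
lemma key (n : ℕ) : ∀ d k : ℕ, n - k ≤ d → ∀ G : Finset (Fin n → ℕ), G.Nonempty →
    (∀ u ∈ G, ∀ v ∈ G, ∀ l : Fin n, (l : ℕ) < k → u l = v l) →
    ∃ L : List (Fin n × Fin n), (∀ p ∈ L, p.1 < p.2) ∧
      ∃ g0 ∈ G, ∀ g ∈ G, ∀ l, applyL n L g0 l ≤ applyL n L g l := by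
  intro d
  induction d with
  | zero =>
    intro k hk G hG hagree
    obtain ⟨g0, hg0⟩ := hG
    refine ⟨[], by simp, g0, hg0, fun g hg l => ?_⟩
    rw [applyL_nil, applyL_nil, hagree g0 hg0 g hg l (lt_of_lt_of_le l.2 (Nat.le_of_sub_eq_zero (Nat.le_zero.1 hk)))]
  | succ d ih =>
    intro k hk G hG hagree
    by_cases hkn : n ≤ k
    · obtain ⟨g0, hg0⟩ := hG
      refine ⟨[], by simp, g0, hg0, fun g hg l => ?_⟩
      rw [applyL_nil, applyL_nil, hagree g0 hg0 g hg l (lt_of_lt_of_le l.2 hkn)]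
    push_neg at hkn
    set i : Fin n := ⟨k, hkn⟩ with hi
    obtain ⟨h0, hh0G, hh0min⟩ := G.exists_min_image (fun g => g i) hG
    set m := h0 i with hm
    set G0 : Finset (Fin n → ℕ) := G.filter (fun g => g i = m) with hG0def
    have hh0G0 : h0 ∈ G0 := by simp [hG0def, hh0G, hm]
    set K : ℕ := G.sup (fun h => Finset.univ.sup h) with hK
    have hKbound : ∀ h ∈ G, ∀ l, h l ≤ K := fun h hh l =>
      le_trans (Finset.le_sup (Finset.mem_univ l)) (Finset.le_sup hh)
    set J : List (Fin n) := (List.finRange n).filter (fun j => i < j) with hJdef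
    have hJnodup : J.Nodup := (List.nodup_finRange n).filter _
    have hJmem : ∀ j : Fin n, j ∈ J ↔ i < j := by
      intro j; simp [hJdef, List.mem_filter, List.mem_finRange]
    have hJgt : ∀ j ∈ J, i < j := fun j hj => (hJmem j).1 hj
    set L1 : List (Fin n × Fin n) := J.flatMap (fun j => List.replicate K (i, j)) with hL1def
    have hL1eval : ∀ a : Fin n → ℕ, ∀ l, applyL n L1 a l = if i < l then a l + K * a i else a l := by
      intro a l
      rw [hL1def, applyL_flat n i K J hJnodup hJgt]
      by_cases h : i < l
      · rw [if_pos ((hJmem l).2 h), if_pos h]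
      · rw [if_neg (fun hmem => h ((hJmem l).1 hmem)), if_neg h]
    have hL1pairs : ∀ p ∈ L1, p.1 < p.2 := by
      intro p hp
      rw [hL1def, List.mem_flatMap] at hp
      obtain ⟨j, hj, hp⟩ := hp
      rw [List.eq_of_mem_replicate hp]
      exact hJgt j hj
    -- image of G0 under applyL L1
    set G1 : Finset (Fin n → ℕ) := G0.image (applyL n L1) with hG1def
    have hG1ne : G1.Nonempty := ⟨applyL n L1 h0, Finset.mem_image_of_mem _ hh0G0⟩
    have hG1agree : ∀ u ∈ G1, ∀ v ∈ G1, ∀ l : Fin n, (l : ℕ) < k + 1 → u l = v l := by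
      intro u hu v hv l hl
      obtain ⟨u0, hu0, rfl⟩ := Finset.mem_image.1 hu
      obtain ⟨v0, hv0, rfl⟩ := Finset.mem_image.1 hv
      rw [Finset.mem_filter] at hu0 hv0
      have hnl : ¬ i < l := by
        simp only [hi, Fin.lt_def]
        omega
      rw [hL1eval, hL1eval, if_neg hnl, if_neg hnl]
      rcases Nat.lt_or_ge (l : ℕ) k with h | h
      · exact hagree u0 hu0.1 v0 hv0.1 l h
      · have : l = i := by
          apply Fin.ext; simp only [hi]; omega
        rw [this, hu0.2, hv0.2]
    obtain ⟨L2, hL2pairs, g1, hg1G1, hg1dom⟩ := ih (k + 1) (by omega) G1 hG1ne hG1agree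
    obtain ⟨g0, hg0G0, hg0eq⟩ := Finset.mem_image.1 hg1G1
    have hg0G : g0 ∈ G := (Finset.mem_filter.1 hg0G0).1
    refine ⟨L2 ++ L1, ?_, g0, hg0G, ?_⟩
    · intro p hp
      rcases List.mem_append.1 hp with h | h
      · exact hL2pairs p h
      · exact hL1pairs p h
    · intro g hgG l
      rw [applyL_append, applyL_append]
      by_cases hgm : g i = m
      · -- g ∈ G0
        have hgG1 : applyL n L1 g ∈ G1 :=
          Finset.mem_image_of_mem _ (Finset.mem_filter.2 ⟨hgG, hgm⟩)
        rw [hg0eq]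
        exact hg1dom _ hgG1 l
      · -- g ∉ G0 : applyL L1 g0 ≤ applyL L1 g pointwise
        have hstep : ∀ l', applyL n L1 g0 l' ≤ applyL n L1 g l' := by
          intro l'
          have hg0i : g0 i = m := (Finset.mem_filter.1 hg0G0).2
          have hgi : m + 1 ≤ g i := by
            have := hh0min g hgG
            omega
          rw [hL1eval, hL1eval]
          by_cases hil : i < l'
          · rw [if_pos hil, if_pos hil, hg0i]
            have h1 : g0 l' ≤ K := hKbound g0 hg0G l'
            calc g0 l' + K * m ≤ K + K * m := by omega
              _ = K * (m + 1) := by ring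
              _ ≤ K * g i := Nat.mul_le_mul_left K hgi
              _ ≤ g l' + K * g i := Nat.le_add_left _ _
          · rw [if_neg hil, if_neg hil]
            rcases Nat.lt_or_ge (l' : ℕ) k with h | h
            · rw [hagree g0 hg0G g hgG l' h]
            · have : l' = i := by
                apply Fin.ext; simp only [hi, Fin.lt_def] at hil ⊢; omega
              rw [this, hg0i]; omega
        rw [hg0eq]
        calc applyL n L2 g1 l = applyL n L2 (applyL n L1 g0) l := by rw [hg0eq]
          _ ≤ applyL n L2 (applyL n L1 g) l := applyL_mono n L2 hstep l

/-- minimal element extraction by strong induction on coordinate sum -/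
lemma exists_minimal (n : ℕ) (S : Set (Fin n → ℕ)) :
    ∀ w ∈ S, ∃ g ∈ S, (∀ l, g l ≤ w l) ∧ ∀ u ∈ S, (∀ l, u l ≤ g l) → u = g := by
  suffices h : ∀ N : ℕ, ∀ w ∈ S, Finset.univ.sum w = N →
      ∃ g ∈ S, (∀ l, g l ≤ w l) ∧ ∀ u ∈ S, (∀ l, u l ≤ g l) → u = g by
    intro w hw; exact h _ w hw rfl
  intro N
  induction N using Nat.strong_induction_on with
  | _ N ihN =>
  intro w hw hN
  by_cases hmin : ∀ u ∈ S, (∀ l, u l ≤ w l) → u = w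
  · exact ⟨w, hw, fun l => le_refl _, hmin⟩
  · push_neg at hmin
    obtain ⟨u, huS, hule, hune⟩ := hmin
    have hsum : Finset.univ.sum u < N := by
      subst hN
      apply Finset.sum_lt_sum (fun l _ => hule l)
      by_contra hcon
      push_neg at hcon
      exact hune (funext fun l => le_antisymm (hule l) (hcon l (Finset.mem_univ l)))
    obtain ⟨g, hgS, hgle, hgmin⟩ := ihN _ hsum u huS rfl
    exact ⟨g, hgS, fun l => le_trans (hgle l) (hule l), hgmin⟩

/-- embedding ℕ-vectors into ℝ-vectors -/
def eR (n : ℕ) (w : Fin n → ℕ) : Fin n → ℝ := fun l => (w l : ℝ)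

lemma eR_applyL (n : ℕ) (L : List (Fin n × Fin n)) (w : Fin n → ℕ) :
    (L.map fun p => blowUp n p.1 p.2).foldr (· ∘ ·) id (eR n w) = eR n (applyL n L w) := by
  induction L with
  | nil => rfl
  | cons p t ih =>
    simp only [List.map_cons, List.foldr_cons, Function.comp_apply, ih, applyL_cons]
    funext l
    simp only [blowUp, bU, eR]
    split <;> push_cast <;> ring

/-- **(Lemma 15 of [SV2], here Lemma `1208052`).**  Let `n ≥ 2` and let `Λ` be a non-empty
subset of `ℤ_{≥0}^n`.  Then there exist a finite composition `Φ` of order-preserving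
monomial blowing-ups of `ℝ^n` and a vector `a ∈ Φ(Λ)` with integer coordinates such that
`Φ(Λ) ⊆ a + ℤ_{≥0}^n`. -/
theorem exists_blowUpComp_translate (n : ℕ) (hn : 2 ≤ n)
    (Λ : Set (Fin n → ℝ)) (hne : Λ.Nonempty)
    (hΛ : ∀ v ∈ Λ, ∀ l : Fin n, ∃ a : ℕ, v l = (a : ℝ)) :
    ∃ Φ : (Fin n → ℝ) → (Fin n → ℝ), IsBlowUpComp n Φ ∧
      ∃ a ∈ Φ '' Λ, (∀ l : Fin n, ∃ z : ℤ, a l = (z : ℝ)) ∧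
        ∀ b ∈ Φ '' Λ, ∀ l : Fin n, ∃ c : ℕ, b l = a l + (c : ℝ) := by
  classical
  set S : Set (Fin n → ℕ) := {w | eR n w ∈ Λ} with hSdef
  -- Λ is the image of S
  have hcover : ∀ v ∈ Λ, ∃ w ∈ S, eR n w = v := by
    intro v hv
    choose f hf using hΛ v hv
    exact ⟨f, by rwa [hSdef, Set.mem_setOf_eq, show eR n f = v from funext fun l => (hf l).symm],
      funext fun l => (hf l).symm⟩
  -- the set of minimal elements of S
  set G : Set (Fin n → ℕ) := {g ∈ S | ∀ u ∈ S, (∀ l, u l ≤ g l) → u = g} with hGdef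
  have hGmin : ∀ w ∈ S, ∃ g ∈ G, ∀ l, g l ≤ w l := by
    intro w hw
    obtain ⟨g, hgS, hgle, hgmin⟩ := exists_minimal n S w hw
    exact ⟨g, ⟨hgS, hgmin⟩, hgle⟩
  have hGanti : IsAntichain (· ≤ ·) G := by
    intro g1 hg1 g2 hg2 hne12 hle
    exact hne12 (hg2.2 g1 hg1.1 (fun l => hle l))
  have hGfin : G.Finite :=
    hGanti.finite_of_partiallyWellOrderedOn (Set.isPWO_of_wellQuasiOrderedLE G)
  obtain ⟨v0, hv0⟩ := hne
  obtain ⟨w0, hw0S, _⟩ := hcover v0 hv0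
  obtain ⟨gm, hgmG, _⟩ := hGmin w0 hw0S
  set Gfin : Finset (Fin n → ℕ) := hGfin.toFinset with hGfindef
  have hGfinne : Gfin.Nonempty := ⟨gm, hGfin.mem_toFinset.2 hgmG⟩
  obtain ⟨L, hLpairs, g0, hg0Gfin, hdom⟩ :=
    key n n 0 (by omega) Gfin hGfinne (by intro u _ v _ l hl; omega)
  have hg0G : g0 ∈ G := hGfin.mem_toFinset.1 hg0Gfin
  set Φ : (Fin n → ℝ) → (Fin n → ℝ) := (L.map fun p => blowUp n p.1 p.2).foldr (· ∘ ·) id with hΦ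
  refine ⟨Φ, ⟨L.map fun p => blowUp n p.1 p.2, ?_, rfl⟩, Φ (eR n g0), ⟨eR n g0, hg0G.1, rfl⟩, ?_, ?_⟩
  · intro f hf
    obtain ⟨p, hp, rfl⟩ := List.mem_map.1 hf
    exact ⟨p.1, p.2, hLpairs p hp, rfl⟩
  · intro l
    refine ⟨(applyL n L g0 l : ℤ), ?_⟩
    rw [hΦ, eR_applyL]
    simp [eR]
  · rintro b ⟨v, hv, rfl⟩ l
    obtain ⟨w, hwS, rfl⟩ := hcover v hv
    obtain ⟨g, hgG, hgle⟩ := hGmin w hwS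
    have h1 : applyL n L g0 l ≤ applyL n L g l :=
      hdom g (hGfin.mem_toFinset.2 hgG) l
    have h2 : applyL n L g l ≤ applyL n L w l := applyL_mono n L hgle l
    refine ⟨applyL n L w l - applyL n L g0 l, ?_⟩
    rw [hΦ, eR_applyL, eR_applyL]
    simp only [eR]
    have : applyL n L g0 l ≤ applyL n L w l := le_trans h1 h2
    push_cast [Nat.cast_sub this]
    ring
end
end

section
/- Let n ≥ 2 and let Λ_1,...,Λ_r be finitely many non-empty subsets of ℤ_{≥0}^n. Then there exist a single finite composition Φ of order-preserving monomial blowing-ups of ℝ^n and vectors a_i ∈ Φ(Λ_i), i = 1,...,r, such that Φ(Λ_i) ⊆ a_i + ℤ_{≥0}^n for every i. -/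
noncomputable section

namespace Aux

variable {n : ℕ}

/-- generic "finite composition of maps satisfying P" -/
def Chain (P : ((Fin n → ℝ) → (Fin n → ℝ)) → Prop) (Φ : (Fin n → ℝ) → (Fin n → ℝ)) : Prop :=
  ∃ L : List ((Fin n → ℝ) → (Fin n → ℝ)), (∀ g ∈ L, P g) ∧ Φ = L.foldr (· ∘ ·) id

lemma chain_id (P : ((Fin n → ℝ) → (Fin n → ℝ)) → Prop) : Chain P id :=
  ⟨[], by simp, rfl⟩

lemma chain_single {P : ((Fin n → ℝ) → (Fin n → ℝ)) → Prop} {g} (h : P g) : Chain P g :=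
  ⟨[g], by simpa, by simp⟩

lemma foldr_comp (L : List ((Fin n → ℝ) → (Fin n → ℝ))) (ψ : (Fin n → ℝ) → (Fin n → ℝ)) :
    L.foldr (· ∘ ·) ψ = (L.foldr (· ∘ ·) id) ∘ ψ := by
  induction L with
  | nil => rfl
  | cons g L ih => simp only [List.foldr_cons, ih]; rfl

lemma chain_comp {P : ((Fin n → ℝ) → (Fin n → ℝ)) → Prop} {Φ Ψ}
    (h1 : Chain P Φ) (h2 : Chain P Ψ) : Chain P (Φ ∘ Ψ) := by
  obtain ⟨L1, hL1, rfl⟩ := h1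
  obtain ⟨L2, hL2, rfl⟩ := h2
  refine ⟨L1 ++ L2, ?_, ?_⟩
  · intro g hg
    rcases List.mem_append.1 hg with h | h
    · exact hL1 g h
    · exact hL2 g h
  · rw [List.foldr_append]; exact (foldr_comp L1 _).symm

lemma chain_mono {P Q : ((Fin n → ℝ) → (Fin n → ℝ)) → Prop} {Φ}
    (h : ∀ g, P g → Q g) (hΦ : Chain P Φ) : Chain Q Φ := by
  obtain ⟨L, hL, rfl⟩ := hΦ
  exact ⟨L, fun g hg => h g (hL g hg), rfl⟩

lemma chain_ind {P : ((Fin n → ℝ) → (Fin n → ℝ)) → Prop} {Φ}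
    (hΦ : Chain P Φ) (Q : ((Fin n → ℝ) → (Fin n → ℝ)) → Prop) (hid : Q id)
    (hcomp : ∀ g Ψ, P g → Q Ψ → Q (g ∘ Ψ)) : Q Φ := by
  obtain ⟨L, hL, rfl⟩ := hΦ
  induction L with
  | nil => exact hid
  | cons g L ih =>
    exact hcomp g _ (hL g (by simp)) (ih (fun g' hg' => hL g' (by simp [hg'])))

/-- all coordinates are natural numbers -/
def NatVal (v : Fin n → ℝ) : Prop := ∀ l, ∃ a : ℕ, v l = a

/-- pointwise monotone -/
def Mono (Φ : (Fin n → ℝ) → (Fin n → ℝ)) : Prop :=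
  ∀ a b : Fin n → ℝ, (∀ l, a l ≤ b l) → ∀ l, Φ a l ≤ Φ b l

/-- preserves NatVal -/
def PresNat (Φ : (Fin n → ℝ) → (Fin n → ℝ)) : Prop :=
  ∀ v, NatVal v → NatVal (Φ v)

/-- blow-up with target index < k -/
def PB (k : ℕ) (g : (Fin n → ℝ) → (Fin n → ℝ)) : Prop :=
  ∃ i j : Fin n, i < j ∧ (j : ℕ) < k ∧ g = blowUp n i j

lemma blowUp_mono (i j : Fin n) : Mono (blowUp n i j) := by
  intro a b h l
  simp only [blowUp]
  split
  · exact add_le_add (h i) (h j)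
  · exact h l

lemma blowUp_presNat (i j : Fin n) : PresNat (blowUp n i j) := by
  intro v hv l
  simp only [blowUp]
  split
  · obtain ⟨a, ha⟩ := hv i; obtain ⟨b, hb⟩ := hv j
    exact ⟨a + b, by rw [ha, hb]; push_cast; ring⟩
  · exact hv l

lemma chain_mono' {k : ℕ} {Φ : (Fin n → ℝ) → (Fin n → ℝ)} (h : Chain (PB k) Φ) : Mono Φ := by
  refine chain_ind h Mono (fun a b h l => h l) ?_
  rintro g Ψ ⟨i, j, _, _, rfl⟩ hΨ a b hab l
  exact blowUp_mono i j _ _ (hΨ a b hab) l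

lemma chain_presNat {k : ℕ} {Φ : (Fin n → ℝ) → (Fin n → ℝ)} (h : Chain (PB k) Φ) : PresNat Φ := by
  refine chain_ind h PresNat (fun v hv => hv) ?_
  rintro g Ψ ⟨i, j, _, _, rfl⟩ hΨ v hv
  exact blowUp_presNat i j _ (hΨ v hv)

lemma chain_isBlowUpComp {Φ} (h : Chain (PB n) Φ) : IsBlowUpComp n Φ := by
  obtain ⟨L, hL, rfl⟩ := h
  exact ⟨L, fun g hg => by obtain ⟨i, j, hij, _, rfl⟩ := hL g hg; exact ⟨i, j, hij, rfl⟩, rfl⟩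

/-- applying a list of blow-ups all targeting the same coordinate jk -/
lemma foldr_blow_apply (jk : Fin n) (I : List (Fin n)) (hI : ∀ i ∈ I, i ≠ jk)
    (b : Fin n → ℝ) : ∀ l : Fin n,
    ((I.map (fun i => blowUp n i jk)).foldr (· ∘ ·) id) b l =
      if l = jk then (I.map b).sum + b jk else b l := by
  induction I with
  | nil =>
    intro l
    simp only [List.map_nil, List.foldr_nil, id_eq, List.sum_nil, zero_add]
    split
    · rename_i h; rw [h]
    · rfl
  | cons i I ih =>
    intro l
    have hne : i ≠ jk := hI i (by simp)
    have ih' := ih (fun i' hi' => hI i' (List.mem_cons_of_mem _ hi'))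
    simp only [List.map_cons, List.foldr_cons, Function.comp_apply, blowUp]
    by_cases hl : l = jk
    · rw [hl]
      rw [if_pos rfl, ih' i, ih' jk, if_neg hne, if_pos rfl, if_pos rfl, List.sum_cons]
      ring
    · rw [if_neg hl, ih' l, if_neg hl, if_neg hl]


lemma sum_map_flatMap_replicate (K : ℕ) (J : List (Fin n)) (b : Fin n → ℝ) :
    (((J.flatMap fun i => List.replicate K i).map b).sum) = (K : ℝ) * (J.map b).sum := by
  induction J with
  | nil => simp
  | cons j J ih =>
    simp only [List.flatMap_cons, List.map_append, List.sum_append, List.map_cons,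
      List.sum_cons, ih, List.map_replicate, List.sum_replicate, nsmul_eq_mul]
    ring

lemma sum_le_strict (J : List (Fin n)) (a b : Fin n → ℝ) (hle : ∀ i ∈ J, a i ≤ b i)
    (l0 : Fin n) (hl0 : l0 ∈ J) (hstrict : a l0 + 1 ≤ b l0) :
    (J.map a).sum + 1 ≤ (J.map b).sum := by
  induction J with
  | nil => simp at hl0
  | cons j J ih =>
    simp only [List.map_cons, List.sum_cons]
    rcases List.mem_cons.1 hl0 with h | h
    · subst h
      have : (J.map a).sum ≤ (J.map b).sum :=
        List.sum_le_sum (fun i hi => hle i (List.mem_cons_of_mem _ hi))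
      linarith
    · have := ih (fun i hi => hle i (List.mem_cons_of_mem _ hi)) h
      have hj := hle j List.mem_cons_self
      linarith

lemma main_single (k : ℕ) (Λ : Set (Fin n → ℝ)) (hne : Λ.Nonempty)
    (hΛ : ∀ v ∈ Λ, NatVal v) :
    ∃ Φ, Chain (PB k) Φ ∧ ∃ a ∈ Φ '' Λ, ∀ b ∈ Φ '' Λ, ∀ l : Fin n, (l : ℕ) < k → a l ≤ b l := by
  induction k with
  | zero =>
    obtain ⟨v, hv⟩ := hne
    exact ⟨id, chain_id _, v, ⟨v, hv, rfl⟩, fun b _ l hl => absurd hl (by omega)⟩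
  | succ k ih =>
    obtain ⟨Φ', hΦ', a', ha'mem, ha'min⟩ := ih
    have hPBle : ∀ g : (Fin n → ℝ) → (Fin n → ℝ), PB k g → PB (k + 1) g := by
      rintro g ⟨i, j, h1, h2, rfl⟩; exact ⟨i, j, h1, by omega, rfl⟩
    by_cases hkn : k < n
    swap
    · refine ⟨Φ', chain_mono hPBle hΦ', a', ha'mem, fun b hb l _ => ha'min b hb l ?_⟩
      exact lt_of_lt_of_le l.isLt (by omega)
    -- main construction
    set jk : Fin n := ⟨k, hkn⟩ with hjk
    set A : Set (Fin n → ℝ) := Φ' '' Λ with hA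
    have hAnat : ∀ b ∈ A, NatVal b := by
      rintro _ ⟨v, hv, rfl⟩; exact chain_presNat hΦ' v (hΛ v hv)
    set S : Set ℕ := {m | ∃ b ∈ A, (∀ l : Fin n, (l : ℕ) < k → b l = a' l) ∧ b jk = (m : ℝ)}
      with hSdef
    have hS : S.Nonempty := by
      obtain ⟨m, hm⟩ := hAnat a' ha'mem jk
      exact ⟨m, a', ha'mem, fun l _ => rfl, hm⟩
    set K : ℕ := sInf S with hK
    obtain ⟨a, hamem, haagree, haK⟩ := Nat.sInf_mem hS
    have hamin : ∀ b ∈ A, ∀ l : Fin n, (l : ℕ) < k → a l ≤ b l := by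
      intro b hb l hl
      rw [haagree l hl]
      exact ha'min b hb l hl
    set J : List (Fin n) := (List.finRange n).filter (fun i : Fin n => decide ((i : ℕ) < k))
      with hJ
    have hJmem : ∀ i : Fin n, i ∈ J ↔ (i : ℕ) < k := by
      intro i; simp [hJ, List.mem_filter]
    set I : List (Fin n) := J.flatMap (fun i => List.replicate K i) with hI
    have hIlt : ∀ i ∈ I, (i : ℕ) < k := by
      intro i hi
      obtain ⟨j, hj, hj2⟩ := List.mem_flatMap.1 hi
      rw [List.eq_of_mem_replicate hj2]
      exact (hJmem j).1 hj
    have hIne : ∀ i ∈ I, i ≠ jk := by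
      intro i hi h
      have := hIlt i hi
      rw [h] at this
      simp [hjk] at this
    set Ψ : (Fin n → ℝ) → (Fin n → ℝ) := (I.map (fun i => blowUp n i jk)).foldr (· ∘ ·) id
      with hΨ
    have hΨapp : ∀ (b : Fin n → ℝ) (l : Fin n),
        Ψ b l = if l = jk then (I.map b).sum + b jk else b l :=
      foldr_blow_apply jk I hIne
    have hΨchain : Chain (PB (k + 1)) Ψ := by
      refine ⟨I.map (fun i => blowUp n i jk), ?_, rfl⟩
      intro g hg
      obtain ⟨i, hi, rfl⟩ := List.mem_map.1 hg
      exact ⟨i, jk, by rw [Fin.lt_def]; exact lt_of_lt_of_le (hIlt i hi) (by simp [hjk]),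
        by simp [hjk], rfl⟩
    refine ⟨Ψ ∘ Φ', chain_comp hΨchain (chain_mono hPBle hΦ'), Ψ a, ?_, ?_⟩
    · rw [Set.image_comp]; exact ⟨a, hamem, rfl⟩
    · rw [Set.image_comp]
      rintro _ ⟨b, hbA, rfl⟩ l hl
      by_cases hlk : (l : ℕ) < k
      · have hne2 : l ≠ jk := by intro h; rw [h] at hlk; simp [hjk] at hlk
        rw [hΨapp a l, hΨapp b l, if_neg hne2, if_neg hne2]
        exact hamin b hbA l hlk
      · have hleq : l = jk := by
          apply Fin.ext; simp [hjk]; omega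
        rw [hleq, hΨapp a jk, hΨapp b jk, if_pos rfl, if_pos rfl, hI,
          sum_map_flatMap_replicate, sum_map_flatMap_replicate]
        -- goal : K * (J.map a).sum + a l ≤ K * (J.map b).sum + b l
        by_cases hagree : ∀ l' : Fin n, (l' : ℕ) < k → b l' = a l'
        · have hmapeq : J.map b = J.map a :=
            List.map_congr_left (fun i hi => hagree i ((hJmem i).1 hi))
          rw [hmapeq]
          -- need a l ≤ b l
          obtain ⟨m, hm⟩ := hAnat b hbA jk
          have hmS : m ∈ S := by
            refine ⟨b, hbA, fun l' hl' => ?_, hm⟩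
            rw [hagree l' hl', haagree l' hl']
          have : K ≤ m := Nat.sInf_le hmS
          have : (K : ℝ) ≤ (m : ℝ) := Nat.cast_le.2 this
          rw [haK, hm]
          linarith
        · push_neg at hagree
          obtain ⟨l0, hl0k, hl0ne⟩ := hagree
          obtain ⟨α, hα⟩ := hAnat a hamem l0
          obtain ⟨β, hβ⟩ := hAnat b hbA l0
          have hαβ : α < β := by
            have h1 : a l0 ≤ b l0 := hamin b hbA l0 hl0k
            rw [hα, hβ] at h1 hl0ne
            exact_mod_cast lt_of_le_of_ne h1 (fun h => hl0ne (by rw [h]))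
          have hstrict : a l0 + 1 ≤ b l0 := by
            rw [hα, hβ]
            have : α + 1 ≤ β := hαβ
            exact_mod_cast this
          have hsum : (J.map a).sum + 1 ≤ (J.map b).sum :=
            sum_le_strict J a b (fun i hi => hamin b hbA i ((hJmem i).1 hi))
              l0 ((hJmem l0).2 hl0k) hstrict
          obtain ⟨γ, hγ⟩ := hAnat b hbA jk
          have hb0 : (0 : ℝ) ≤ b jk := by rw [hγ]; positivity
          have hK0 : (0 : ℝ) ≤ (K : ℝ) := Nat.cast_nonneg _
          have : (K : ℝ) * ((J.map a).sum + 1) ≤ (K : ℝ) * (J.map b).sum :=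
            mul_le_mul_of_nonneg_left hsum hK0
          rw [haK]
          linarith

lemma main_multi (r : ℕ) (Λ : Fin r → Set (Fin n → ℝ)) (hne : ∀ t, (Λ t).Nonempty)
    (hΛ : ∀ t, ∀ v ∈ Λ t, NatVal v) :
    ∃ Φ, Chain (PB n) Φ ∧ ∀ t, ∃ a ∈ Φ '' (Λ t), ∀ b ∈ Φ '' (Λ t), ∀ l, a l ≤ b l := by
  induction r with
  | zero => exact ⟨id, chain_id _, fun t => t.elim0⟩
  | succ r ih =>
    obtain ⟨Φ0, hΦ0, hmin⟩ := ih (fun s => Λ s.castSucc) (fun s => hne _) (fun s => hΛ _)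
    have hne' : (Φ0 '' (Λ (Fin.last r))).Nonempty := (hne _).image _
    have hnat' : ∀ v ∈ Φ0 '' (Λ (Fin.last r)), NatVal v := by
      rintro _ ⟨v, hv, rfl⟩; exact chain_presNat hΦ0 v (hΛ _ v hv)
    obtain ⟨Ψ, hΨ, a, hamem, hamin⟩ := main_single n (Φ0 '' (Λ (Fin.last r))) hne' hnat'
    refine ⟨Ψ ∘ Φ0, chain_comp hΨ hΦ0, ?_⟩
    intro t
    rw [Set.image_comp]
    induction t using Fin.lastCases with
    | last => exact ⟨a, hamem, fun b hb l => hamin b hb l l.isLt⟩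
    | cast s =>
      obtain ⟨as, hasmem, hasmin⟩ := hmin s
      refine ⟨Ψ as, ⟨as, hasmem, rfl⟩, ?_⟩
      rintro _ ⟨b, hbB, rfl⟩ l
      exact chain_mono' hΨ as b (fun l' => hasmin b hbB l') l

end Aux

/-- **(Corollary `2808052`).**  Let `n ≥ 2` and let `Λ₁, …, Λ_r` be finitely many non-empty
subsets of `ℤ_{≥0}^n`.  Then there exist a single finite composition `Φ` of order-preserving
monomial blowing-ups of `ℝ^n` and vectors `aᵢ ∈ Φ(Λᵢ)` such that `Φ(Λᵢ) ⊆ aᵢ + ℤ_{≥0}^n`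
for every `i`. -/
theorem exists_blowUpComp_translate_finitely_many (n : ℕ) (hn : 2 ≤ n)
    (r : ℕ) (Λ : Fin r → Set (Fin n → ℝ)) (hne : ∀ t, (Λ t).Nonempty)
    (hΛ : ∀ t, ∀ v ∈ Λ t, ∀ l : Fin n, ∃ a : ℕ, v l = (a : ℝ)) :
    ∃ Φ : (Fin n → ℝ) → (Fin n → ℝ), IsBlowUpComp n Φ ∧
      ∀ t : Fin r, ∃ a ∈ Φ '' (Λ t), (∀ l : Fin n, ∃ z : ℤ, a l = (z : ℝ)) ∧
        ∀ b ∈ Φ '' (Λ t), ∀ l : Fin n, ∃ c : ℕ, b l = a l + (c : ℝ) := by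
  obtain ⟨Φ, hΦ, h⟩ := Aux.main_multi r Λ hne (fun t v hv => hΛ t v hv)
  refine ⟨Φ, Aux.chain_isBlowUpComp hΦ, ?_⟩
  intro t
  obtain ⟨a, hamem, hamin⟩ := h t
  have hnat : ∀ b ∈ Φ '' (Λ t), Aux.NatVal b := by
    rintro _ ⟨v, hv, rfl⟩; exact Aux.chain_presNat hΦ v (hΛ t v hv)
  refine ⟨a, hamem, fun l => ?_, ?_⟩
  · obtain ⟨α, hα⟩ := hnat a hamem l
    exact ⟨(α : ℤ), by rw [hα]; push_cast; rfl⟩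
  · intro b hb l
    obtain ⟨α, hα⟩ := hnat a hamem l
    obtain ⟨β, hβ⟩ := hnat b hb l
    have hle : α ≤ β := by
      have := hamin b hb l
      rw [hα, hβ] at this
      exact_mod_cast this
    refine ⟨β - α, ?_⟩
    rw [hα, hβ]
    push_cast [Nat.cast_sub hle]
    ring
end
end

section
/- Let n ≥ 2, let Δ be the convex hull of a finite set of points of ℝ^n, contained in an affine hyperplane H with 0 ∉ H and with non-empty interior in H, and let Γ(Δ) = ∪_{a ∈ Δ} ℝ_{≥0}·a be the polyhedral cone projected from Δ. Then the following are equivalent: (1) there exists a finite composition Φ of order-preserving monomial blowing-ups with Φ(Γ(Δ)) ⊆ ℝ_{≥0}^n; (2) for every non-zero vector c ∈ Γ(Δ), the first non-zero component of c is positive (equivalently, 0 <_lex c). -/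
noncomputable section

lemma lex_lt_iff {n : ℕ} {x y : Fin n → ℝ} :
    toLex x < toLex y ↔ ∃ i, (∀ j, j < i → x j = y j) ∧ x i < y i := Iff.rfl

lemma blowUp_lex_neg {n : ℕ} {i j : Fin n} (hij : i < j) {v : Fin n → ℝ}
    (h : toLex v < toLex (0 : Fin n → ℝ)) :
    toLex (blowUp n i j v) < toLex (0 : Fin n → ℝ) := by
  obtain ⟨k, hk0, hkneg⟩ := lex_lt_iff.mp h
  simp only [Pi.zero_apply] at hk0 hkneg
  rcases eq_or_ne k j with rfl | hkj
  · refine lex_lt_iff.mpr ⟨k, fun l hl => ?_, ?_⟩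
    · simp only [Pi.zero_apply, blowUp, if_neg (ne_of_lt hl)]
      exact hk0 l hl
    · simp only [Pi.zero_apply, blowUp, if_pos rfl]
      rw [hk0 i hij]; simpa using hkneg
  · refine lex_lt_iff.mpr ⟨k, fun l hl => ?_, ?_⟩
    · simp only [Pi.zero_apply, blowUp]
      split_ifs with hlj
      · subst hlj
        rw [hk0 i (lt_trans hij hl), hk0 l hl, add_zero]
      · exact hk0 l hl
    · simpa only [Pi.zero_apply, blowUp, if_neg hkj] using hkneg

lemma blowUp_add {n : ℕ} (i j : Fin n) (a b : Fin n → ℝ) :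
    blowUp n i j (a + b) = blowUp n i j a + blowUp n i j b := by
  funext l; simp only [blowUp, Pi.add_apply]; split_ifs <;> ring

lemma blowUp_smul {n : ℕ} (i j : Fin n) (r : ℝ) (a : Fin n → ℝ) :
    blowUp n i j (r • a) = r • blowUp n i j a := by
  funext l; simp only [blowUp, Pi.smul_apply, smul_eq_mul]; split_ifs <;> ring

lemma comp_isLinear {n : ℕ} (L : List ((Fin n → ℝ) → (Fin n → ℝ)))
    (hL : ∀ g ∈ L, ∃ i j : Fin n, i < j ∧ g = blowUp n i j) :
    IsLinearMap ℝ (L.foldr (· ∘ ·) id) := by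
  induction L with
  | nil => exact ⟨fun a b => rfl, fun r a => rfl⟩
  | cons g L ih =>
    obtain ⟨i, j, _, rfl⟩ := hL g (List.mem_cons_self)
    have ih' := ih (fun g hg => hL g (List.mem_cons_of_mem _ hg))
    constructor
    · intro a b
      simp only [List.foldr_cons, Function.comp_apply, ih'.map_add, blowUp_add]
    · intro r a
      simp only [List.foldr_cons, Function.comp_apply, ih'.map_smul, blowUp_smul]

lemma comp_lex_neg {n : ℕ} (L : List ((Fin n → ℝ) → (Fin n → ℝ)))
    (hL : ∀ g ∈ L, ∃ i j : Fin n, i < j ∧ g = blowUp n i j)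
    {v : Fin n → ℝ} (h : toLex v < toLex (0 : Fin n → ℝ)) :
    toLex (L.foldr (· ∘ ·) id v) < toLex (0 : Fin n → ℝ) := by
  induction L with
  | nil => exact h
  | cons g L ih =>
    obtain ⟨i, j, hij, rfl⟩ := hL _ (List.mem_cons_self)
    exact blowUp_lex_neg hij (ih (fun g hg => hL g (List.mem_cons_of_mem _ hg)))

lemma foldr_append_comp {n : ℕ} (L₁ L₂ : List ((Fin n → ℝ) → (Fin n → ℝ))) :
    (L₁ ++ L₂).foldr (· ∘ ·) id = (L₁.foldr (· ∘ ·) id) ∘ (L₂.foldr (· ∘ ·) id) := by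
  induction L₁ with
  | nil => rfl
  | cons g L ih => simp [List.foldr_cons, ih, Function.comp_assoc]

-- coordinates ≤ K are untouched by blowups with K ≤ i
lemma foldr_fix_low {n : ℕ} (K : ℕ) (L : List ((Fin n → ℝ) → (Fin n → ℝ)))
    (hL : ∀ g ∈ L, ∃ i j : Fin n, i < j ∧ K ≤ (i : ℕ) ∧ g = blowUp n i j)
    (v : Fin n → ℝ) (l : Fin n) (hl : (l : ℕ) ≤ K) :
    L.foldr (· ∘ ·) id v l = v l := by
  induction L with
  | nil => rfl
  | cons g L ih =>
    obtain ⟨i, j, hij, hKi, rfl⟩ := hL _ (List.mem_cons_self)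
    have ih' := ih (fun g hg => hL g (List.mem_cons_of_mem _ hg))
    have hlj : l ≠ j := by
      intro h; subst h
      exact absurd (lt_of_le_of_lt hKi hij) (not_lt.mpr hl)
    simp only [List.foldr_cons, Function.comp_apply, blowUp, if_neg hlj]
    exact ih'

-- iterate of blowUp formula
lemma blowUp_iterate {n : ℕ} {i j : Fin n} (hij : i ≠ j) (K : ℕ) (v : Fin n → ℝ) :
    (blowUp n i j)^[K] v = fun l => if l = j then (K : ℝ) * v i + v j else v l := by
  induction K with
  | zero => funext l; by_cases h : l = j <;> simp [h]
  | succ K ih =>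
    funext l
    rw [Function.iterate_succ_apply', ih]
    simp only [blowUp, if_neg hij]
    split_ifs with h
    · push_cast; ring
    · rfl

lemma foldr_replicate {n : ℕ} (K : ℕ) (g : (Fin n → ℝ) → (Fin n → ℝ)) :
    (List.replicate K g).foldr (· ∘ ·) id = g^[K] := by
  induction K with
  | zero => rfl
  | succ K ih =>
    rw [List.replicate_succ, List.foldr_cons, ih, ← Function.iterate_succ', Function.iterate_succ]

lemma theta_formula {n : ℕ} (k : Fin n) (K : ℕ) (js : List (Fin n)) (hnd : js.Nodup)
    (hjs : ∀ j ∈ js, k < j) (w : Fin n → ℝ) :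
    ∀ l : Fin n, (js.flatMap (fun j => List.replicate K (blowUp n k j))).foldr (· ∘ ·) id w l
      = if l ∈ js then (K : ℝ) * w k + w l else w l := by
  induction js with
  | nil => intro l; simp
  | cons j js ih =>
    intro l
    have hnd' := hnd.of_cons
    have hjs' : ∀ j' ∈ js, k < j' := fun j' hj' => hjs j' (List.mem_cons_of_mem _ hj')
    have hjnotin : j ∉ js := (List.nodup_cons.mp hnd).1
    have hkj : k ≠ j := ne_of_lt (hjs j (List.mem_cons_self))
    have hknotin : k ∉ js := fun hk => absurd (hjs' k hk) (lt_irrefl k)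
    rw [List.flatMap_cons, foldr_append_comp, foldr_replicate, Function.comp_apply,
      blowUp_iterate hkj]
    beta_reduce
    rw [ih hnd' hjs' k, ih hnd' hjs' j, ih hnd' hjs' l, if_neg hknotin, if_neg hjnotin]
    by_cases hlj : l = j
    · subst hlj
      rw [if_pos rfl, if_pos (List.mem_cons_self)]
    · rw [if_neg hlj]
      by_cases hljs : l ∈ js
      · rw [if_pos hljs, if_pos (List.mem_cons_of_mem _ hljs)]
      · rw [if_neg hljs, if_neg (by simp [hlj, hljs])]

lemma main_induction {n : ℕ} (m : ℕ) : ∀ (S : Finset (Fin n → ℝ)),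
    (∀ v ∈ S, (∀ l : Fin n, (l : ℕ) < n - m → v l = 0) ∧ toLex (0 : Fin n → ℝ) ≤ toLex v) →
    ∃ L : List ((Fin n → ℝ) → (Fin n → ℝ)),
      (∀ g ∈ L, ∃ i j : Fin n, i < j ∧ n - m ≤ (i : ℕ) ∧ g = blowUp n i j) ∧
      ∀ v ∈ S, ∀ l : Fin n, 0 ≤ L.foldr (· ∘ ·) id v l := by
  induction m with
  | zero =>
    intro S hS
    refine ⟨[], by simp, fun v hv l => ?_⟩
    have : v l = 0 := (hS v hv).1 l (by omega)
    simp [this]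
  | succ m ih =>
    intro S hS
    by_cases hmn : n ≤ m
    · obtain ⟨L, hL, hL2⟩ := ih S (by
        intro v hv
        refine ⟨fun l hl => (hS v hv).1 l (by omega), (hS v hv).2⟩)
      exact ⟨L, fun g hg => by
        obtain ⟨i, j, hij, hi, hg⟩ := hL g hg
        exact ⟨i, j, hij, by omega, hg⟩, hL2⟩
    · push_neg at hmn
      classical
      set k : ℕ := n - m - 1 with hk
      have hkn : k < n := by omega
      set kf : Fin n := ⟨k, hkn⟩ with hkf
      -- vectors in S with positive k-th coordinate
      have hBpos : ∀ v ∈ S, v kf ≠ 0 → 0 < v kf := by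
        intro v hv hvk
        rcases lt_or_gt_of_ne hvk with hneg | hpos
        · exfalso
          have : toLex v < toLex (0 : Fin n → ℝ) := by
            refine lex_lt_iff.mpr ⟨kf, fun l hl => ?_, by simpa using hneg⟩
            have hlk : (l : ℕ) < k := hl
            have : (l : ℕ) < n - (m + 1) := by omega
            simpa using (hS v hv).1 l this
          exact absurd this (not_lt.mpr (hS v hv).2)
        · exact hpos
      -- inductive hypothesis applied to the subset A
      set A : Finset (Fin n → ℝ) := S.filter (fun v => v kf = 0) with hA
      obtain ⟨L₁, hL₁, hA1⟩ := ih A (by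
        intro v hv
        rw [hA, Finset.mem_filter] at hv
        refine ⟨fun l hl => ?_, (hS v hv.1).2⟩
        rcases lt_or_eq_of_le (Nat.lt_succ_iff.mp (by omega : (l : ℕ) < k + 1)) with h | h
        · exact (hS v hv.1).1 l (by omega)
        · have : l = kf := Fin.ext h
          rw [this]; exact hv.2)
      set Ψ := L₁.foldr (· ∘ ·) id with hΨ
      have hfix : ∀ v : Fin n → ℝ, ∀ l : Fin n, (l : ℕ) ≤ k → Ψ v l = v l := by
        intro v l hl
        refine foldr_fix_low k L₁ ?_ v l hl
        intro g hg
        obtain ⟨i, j, hij, hi, hgg⟩ := hL₁ g hg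
        exact ⟨i, j, hij, by omega, hgg⟩
      -- choose K large enough
      have hchoice : ∀ v : Fin n → ℝ, ∀ j : Fin n, ∃ K : ℕ, (-Ψ v j) / (v kf) ≤ K :=
        fun v j => exists_nat_ge _
      set Kf : (Fin n → ℝ) → ℕ :=
        fun v => Finset.univ.sup (fun j : Fin n => (hchoice v j).choose) with hKf
      set K : ℕ := S.sup Kf with hKdef
      have hK : ∀ v ∈ S, v kf ≠ 0 → ∀ j : Fin n, 0 ≤ (K : ℝ) * v kf + Ψ v j := by
        intro v hv hvk j
        have hpos := hBpos v hv hvk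
        have h1 : (-Ψ v j) / (v kf) ≤ ((hchoice v j).choose : ℝ) := (hchoice v j).choose_spec
        have h2 : (hchoice v j).choose ≤ K :=
          le_trans (Finset.le_sup (f := fun j : Fin n => (hchoice v j).choose) (Finset.mem_univ j))
            (Finset.le_sup (f := Kf) hv)
        have h3 : (-Ψ v j) / (v kf) ≤ (K : ℝ) := h1.trans (by exact_mod_cast h2)
        have h4 := (div_le_iff₀ hpos).mp h3
        linarith
      -- list of coordinates above k
      set js : List (Fin n) := (List.finRange n).filter (fun j => kf < j) with hjs
      have hjsnd : js.Nodup := (List.nodup_finRange n).filter _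
      have hjsmem : ∀ j : Fin n, j ∈ js ↔ kf < j := by
        intro j; rw [hjs, List.mem_filter]; simp [List.mem_finRange]
      set L₂ : List ((Fin n → ℝ) → (Fin n → ℝ)) :=
        js.flatMap (fun j => List.replicate K (blowUp n kf j)) with hL₂
      refine ⟨L₂ ++ L₁, ?_, ?_⟩
      · intro g hg
        rcases List.mem_append.mp hg with hg | hg
        · rw [hL₂, List.mem_flatMap] at hg
          obtain ⟨j, hj, hgj⟩ := hg
          have := List.eq_of_mem_replicate hgj
          exact ⟨kf, j, (hjsmem j).mp hj, by simp [hkf]; omega, this⟩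
        · obtain ⟨i, j, hij, hi, hgg⟩ := hL₁ g hg
          exact ⟨i, j, hij, by omega, hgg⟩
      · intro v hv l
        rw [foldr_append_comp, Function.comp_apply]
        have hform := theta_formula kf K js hjsnd (fun j hj => (hjsmem j).mp hj) (Ψ v) l
        rw [← hL₂] at hform
        rw [hform]
        by_cases hvk : v kf = 0
        · have hvA : v ∈ A := by rw [hA, Finset.mem_filter]; exact ⟨hv, hvk⟩
          have hnn := hA1 v hvA
          have hΨk : Ψ v kf = 0 := by rw [hfix v kf (le_refl k)]; exact hvk
          by_cases hljs : l ∈ js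
          · rw [if_pos hljs, hΨk, mul_zero, zero_add]; exact hnn l
          · rw [if_neg hljs]; exact hnn l
        · by_cases hljs : l ∈ js
          · rw [if_pos hljs]
            have hΨk : Ψ v kf = v kf := hfix v kf (le_refl k)
            rw [hΨk]
            exact hK v hv hvk l
          · rw [if_neg hljs]
            have hlk : (l : ℕ) ≤ k := by
              have := (hjsmem l).not.mp hljs
              rw [hkf] at this
              simp only [Fin.lt_iff_val_lt_val, not_lt] at this
              exact this
            rw [hfix v l hlk]
            rcases lt_or_eq_of_le hlk with h | h
            · rw [(hS v hv).1 l (by omega)]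
            · have : l = kf := Fin.ext h
              rw [this]
              exact le_of_lt (hBpos v hv hvk)

/-- **(Theorem `2008051`).**  Let `Δ` be the convex hull of a finite set of points of `ℝ^n`,
contained in an affine hyperplane `H = {x | φ x = c}` with `0 ∉ H` (i.e. `c ≠ 0`) and with
non-empty interior in `H`, and let `Γ(Δ) = ⋃_{a ∈ Δ} ℝ_{≥0}·a` be the polyhedral cone
projected from `Δ`.  Then the following are equivalent: (1) there is a finite composition
`Φ` of order-preserving monomial blowing-ups with `Φ(Γ(Δ)) ⊆ ℝ_{≥0}^n`; (2) every non-zero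
vector of `Γ(Δ)` is lexicographically positive (its first non-zero component is positive). -/
theorem polyhedralCone_bringable_to_first_quadrant_iff_lex_positive
    (n : ℕ) (hn : 2 ≤ n)
    (F : Finset (Fin n → ℝ))
    (φ : (Fin n → ℝ) →ₗ[ℝ] ℝ) (c : ℝ) (hc : c ≠ 0)
    (Δ : Set (Fin n → ℝ)) (hΔ : Δ = convexHull ℝ (F : Set (Fin n → ℝ)))
    (hΔH : ∀ x ∈ Δ, φ x = c)
    (hint : ∃ x ∈ Δ, ∃ ε > 0, ∀ y : Fin n → ℝ, φ y = c → dist y x < ε → y ∈ Δ)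
    (Γ : Set (Fin n → ℝ)) (hΓ : Γ = {w | ∃ r : ℝ, 0 ≤ r ∧ ∃ a ∈ Δ, w = r • a}) :
    (∃ Φ : (Fin n → ℝ) → (Fin n → ℝ), IsBlowUpComp n Φ ∧
        ∀ w ∈ Φ '' Γ, ∀ l : Fin n, 0 ≤ w l) ↔
      (∀ w ∈ Γ, w ≠ 0 → toLex (0 : Fin n → ℝ) < toLex w) := by
  constructor
  · rintro ⟨Φ, ⟨L, hL, rfl⟩, hpos⟩ w hw hw0
    by_contra hlex
    have hne : toLex w ≠ toLex (0 : Fin n → ℝ) := by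
      intro h
      exact hw0 (toLex.injective h)
    have hlt : toLex w < toLex (0 : Fin n → ℝ) := by
      have htri := lt_trichotomy (toLex w) (toLex (0 : Fin n → ℝ))
      rcases htri with h | h | h
      · exact h
      · exact absurd h hne
      · exact absurd h hlex
    obtain ⟨i, hi0, hina⟩ := lex_lt_iff.mp (comp_lex_neg L hL hlt)
    have := hpos (L.foldr (· ∘ ·) id w) ⟨w, hw, rfl⟩ i
    simp only [Pi.zero_apply] at hina
    exact (not_le.mpr hina) this
  · intro h2
    have hFΓ : ∀ v ∈ F, v ∈ Γ := by
      intro v hv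
      rw [hΓ]
      exact ⟨1, zero_le_one, v, by rw [hΔ]; exact subset_convexHull ℝ _ hv, (one_smul ℝ v).symm⟩
    have hFne : ∀ v ∈ F, v ≠ (0 : Fin n → ℝ) := by
      intro v hv h0
      apply hc
      rw [← hΔH v (by rw [hΔ]; exact subset_convexHull ℝ _ hv), h0, map_zero]
    obtain ⟨L, hL, hnn⟩ := main_induction (n := n) n F (by
      intro v hv
      refine ⟨fun l hl => absurd hl (by omega), le_of_lt (h2 v (hFΓ v hv) (hFne v hv))⟩)
    have hL' : ∀ g ∈ L, ∃ i j : Fin n, i < j ∧ g = blowUp n i j := by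
      intro g hg
      obtain ⟨i, j, hij, _, hg⟩ := hL g hg
      exact ⟨i, j, hij, hg⟩
    refine ⟨L.foldr (· ∘ ·) id, ⟨L, hL', rfl⟩, ?_⟩
    rintro _ ⟨u, hu, rfl⟩ l
    rw [hΓ] at hu
    obtain ⟨r, hr, a, ha, rfl⟩ := hu
    have hlin := comp_isLinear L hL'
    have horth : Convex ℝ {x : Fin n → ℝ | ∀ l : Fin n, 0 ≤ x l} := by
      intro x hx y hy s t hs ht hst l
      exact add_nonneg (mul_nonneg hs (hx l)) (mul_nonneg ht (hy l))
    have himg : L.foldr (· ∘ ·) id a ∈ {x : Fin n → ℝ | ∀ l : Fin n, 0 ≤ x l} := by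
      have ha' : a ∈ convexHull ℝ (F : Set (Fin n → ℝ)) := hΔ ▸ ha
      have : L.foldr (· ∘ ·) id a ∈ L.foldr (· ∘ ·) id '' convexHull ℝ (F : Set (Fin n → ℝ)) :=
        ⟨a, ha', rfl⟩
      rw [hlin.image_convexHull] at this
      refine convexHull_min ?_ horth this
      rintro _ ⟨v, hv, rfl⟩ l
      exact hnn v hv l
    rw [hlin.map_smul]
    exact mul_nonneg hr (himg l)
end
end

section
/- Let n ≥ 2, let Γ ⊆ ℝ^n be an S-cone (i.e. there is a finite composition Φ of order-preserving monomial blowing-ups with Φ(Γ) ⊆ ℝ_{≥0}^n), and let d be a positive integer. Then every subset of Γ ∩ (1/d)ℤ^n is well-ordered for the lexicographic order; consequently, every formal sum f = Σ f_v x^v whose exponents v all lie in Γ ∩ (1/d)ℤ^n is a Hahn series, i.e. an element of K. -/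
noncomputable section

/-- An order-preserving blowing-up is strictly monotone for the lexicographic order. -/
lemma blowUp_strictMono {n : ℕ} {i j : Fin n} (hij : i < j) {a b : Fin n → ℝ}
    (h : toLex a < toLex b) : toLex (blowUp n i j a) < toLex (blowUp n i j b) := by
  obtain ⟨l, hl, hlt⟩ := h
  have hl' : ∀ m, m < l → a m = b m := hl
  have hlt' : a l < b l := hlt
  by_cases hlj : l = j
  · subst hlj
    refine ⟨l, fun m hm => ?_, ?_⟩
    · show blowUp n i l a m = blowUp n i l b m
      simp only [blowUp, if_neg (ne_of_lt hm)]
      exact hl' m hm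
    · show blowUp n i l a l < blowUp n i l b l
      have := hl' i hij
      simp only [blowUp, if_pos rfl, if_true]
      linarith
  · refine ⟨l, fun m hm => ?_, ?_⟩
    · show blowUp n i j a m = blowUp n i j b m
      simp only [blowUp]
      by_cases hmj : m = j
      · subst hmj
        have h1 : i < l := lt_trans hij hm
        simp [hl' i h1, hl' m hm]
      · simp only [if_neg hmj]
        exact hl' m hm
    · show blowUp n i j a l < blowUp n i j b l
      simpa only [blowUp, if_neg hlj] using hlt'

/-- A blowing-up preserves the lattice `(1/d)ℤ^n`. -/
lemma blowUp_lattice {n : ℕ} (i j : Fin n) (d : ℕ) {a : Fin n → ℝ}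
    (h : ∀ l, ∃ z : ℤ, a l = (z : ℝ) / (d : ℝ)) :
    ∀ l, ∃ z : ℤ, blowUp n i j a l = (z : ℝ) / (d : ℝ) := by
  intro l
  by_cases hlj : l = j
  · obtain ⟨zi, hzi⟩ := h i
    obtain ⟨zj, hzj⟩ := h j
    exact ⟨zi + zj, by simp [blowUp, hlj, hzi, hzj, add_div]⟩
  · obtain ⟨z, hz⟩ := h l
    exact ⟨z, by simp [blowUp, hlj, hz]⟩

/-- A composition of order-preserving blowing-ups is strictly monotone for lex. -/
lemma comp_strictMono {n : ℕ} {Φ : (Fin n → ℝ) → (Fin n → ℝ)} (hΦ : IsBlowUpComp n Φ)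
    {a b : Fin n → ℝ} (h : toLex a < toLex b) : toLex (Φ a) < toLex (Φ b) := by
  obtain ⟨L, hL, rfl⟩ := hΦ
  induction L with
  | nil => exact h
  | cons g L ih =>
    obtain ⟨i, j, hij, rfl⟩ := hL g (List.mem_cons_self)
    exact blowUp_strictMono hij (ih (fun g hg => hL g (List.mem_cons_of_mem _ hg)))

/-- A composition of blowing-ups preserves the lattice `(1/d)ℤ^n`. -/
lemma comp_lattice {n : ℕ} {Φ : (Fin n → ℝ) → (Fin n → ℝ)} (hΦ : IsBlowUpComp n Φ)
    (d : ℕ) {a : Fin n → ℝ} (h : ∀ l, ∃ z : ℤ, a l = (z : ℝ) / (d : ℝ)) :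
    ∀ l, ∃ z : ℤ, Φ a l = (z : ℝ) / (d : ℝ) := by
  obtain ⟨L, hL, rfl⟩ := hΦ
  induction L with
  | nil => exact h
  | cons g L ih =>
    obtain ⟨i, j, hij, rfl⟩ := hL g (List.mem_cons_self)
    exact blowUp_lattice i j d (ih (fun g hg => hL g (List.mem_cons_of_mem _ hg)))

/-- The set of lattice points with nonnegative coordinates is well-ordered for lex. -/
lemma wf_nonneg_lattice (n d : ℕ) (hd : 0 < d) :
    {w : Lex (Fin n → ℝ) | (∀ l, 0 ≤ ofLex w l) ∧
      ∀ l, ∃ z : ℤ, ofLex w l = (z : ℝ) / (d : ℝ)}.IsWF := by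
  set T := {w : Lex (Fin n → ℝ) | (∀ l, 0 ≤ ofLex w l) ∧
      ∀ l, ∃ z : ℤ, ofLex w l = (z : ℝ) / (d : ℝ)} with hT
  have hdR : (0 : ℝ) < (d : ℝ) := by exact_mod_cast hd
  set F : Lex (Fin n → ℝ) → Lex (Fin n → ℕ) :=
    fun w => toLex fun l => (⌊ofLex w l * (d : ℝ)⌋).toNat with hF
  have key : ∀ w ∈ T, ∀ l : Fin n, ∀ z : ℤ, ofLex w l = (z : ℝ) / (d : ℝ) →
      (⌊ofLex w l * (d : ℝ)⌋ = z ∧ 0 ≤ z) := by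
    intro w hw l z hz
    have h1 : ofLex w l * (d : ℝ) = (z : ℝ) := by rw [hz]; field_simp
    refine ⟨by rw [h1]; exact Int.floor_intCast z, ?_⟩
    have h2 := hw.1 l
    rw [hz] at h2
    have h3 : (0 : ℝ) * (d : ℝ) ≤ (z : ℝ) := (le_div_iff₀ hdR).1 h2
    exact_mod_cast (zero_mul (d : ℝ)) ▸ h3
  have mono : ∀ a b : T, (a : Lex (Fin n → ℝ)) < b → F a < F b := by
    rintro ⟨a, ha⟩ ⟨b, hb⟩ hab
    obtain ⟨l, hl, hlt⟩ := hab
    refine ⟨l, fun m hm => ?_, ?_⟩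
    · show (⌊ofLex a m * (d : ℝ)⌋).toNat = (⌊ofLex b m * (d : ℝ)⌋).toNat
      have : ofLex a m = ofLex b m := hl m hm
      rw [this]
    · show (⌊ofLex a l * (d : ℝ)⌋).toNat < (⌊ofLex b l * (d : ℝ)⌋).toNat
      obtain ⟨za, hza⟩ := ha.2 l
      obtain ⟨zb, hzb⟩ := hb.2 l
      obtain ⟨hfa, hza0⟩ := key a ha l za hza
      obtain ⟨hfb, hzb0⟩ := key b hb l zb hzb
      rw [hfa, hfb]
      have hzz : za < zb := by
        have h4 : (za : ℝ) / d < (zb : ℝ) / d := by rw [← hza, ← hzb]; exact hlt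
        have := (div_lt_div_iff_of_pos_right hdR).1 h4
        exact_mod_cast this
      omega
  have : WellFounded fun a b : T => a < b := by
    refine Subrelation.wf (r := fun a b : T => F a < F b) ?_
      (InvImage.wf (fun a : T => F a) ?_)
    · intro a b h; exact mono a b h
    · exact IsWellFounded.wf
  exact this

/-- **(Corollary `1808052`).**  Let `n ≥ 2`, let `Γ ⊆ ℝ^n` be an `S`-cone (some finite
composition of order-preserving monomial blowing-ups takes it into `ℝ_{≥0}^n`) and let
`d` be a positive integer.  Then every subset of `Γ ∩ (1/d)ℤ^n` is well-ordered for the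
lexicographic order; consequently, every formal sum `f = Σ f_v x^v` over a field `k`
whose exponents `v` all lie in `Γ ∩ (1/d)ℤ^n` is a Hahn series, i.e. an element of `K`. -/
theorem sCone_lattice_wellOrdered (k : Type*) [Field k] (n : ℕ) (hn : 2 ≤ n)
    (Γ : Set (Fin n → ℝ))
    (hΓ : ∃ Φ : (Fin n → ℝ) → (Fin n → ℝ), IsBlowUpComp n Φ ∧
      ∀ w ∈ Φ '' Γ, ∀ l : Fin n, 0 ≤ w l)
    (d : ℕ) (hd : 0 < d) :
    (∀ S : Set (Lex (Fin n → ℝ)),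
        (∀ v ∈ S, ofLex v ∈ Γ ∧ ∀ l : Fin n, ∃ a : ℤ, ofLex v l = (a : ℝ) / (d : ℝ)) →
        S.IsWF) ∧
    (∀ g : Lex (Fin n → ℚ) → k,
        (∀ v : Lex (Fin n → ℚ), g v ≠ 0 →
          ((fun l => ((ofLex v l : ℚ) : ℝ)) ∈ Γ ∧
            ∀ l : Fin n, ∃ a : ℤ, ofLex v l = (a : ℚ) / (d : ℚ))) →
        ∃ f : HahnSeries (Lex (Fin n → ℚ)) k, ∀ v, f.coeff v = g v) := by
  obtain ⟨Φ, hΦcomp, hΦnn⟩ := hΓ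
  have hTwf := wf_nonneg_lattice n d hd
  set T := {w : Lex (Fin n → ℝ) | (∀ l, 0 ≤ ofLex w l) ∧
      ∀ l, ∃ z : ℤ, ofLex w l = (z : ℝ) / (d : ℝ)} with hTdef
  have part1 : ∀ S : Set (Lex (Fin n → ℝ)),
      (∀ v ∈ S, ofLex v ∈ Γ ∧ ∀ l : Fin n, ∃ a : ℤ, ofLex v l = (a : ℝ) / (d : ℝ)) →
      S.IsWF := by
    intro S hS
    have hG : ∀ v : S, toLex (Φ (ofLex v.1)) ∈ T := by
      intro v
      refine ⟨fun l => hΦnn _ ⟨ofLex v.1, (hS v.1 v.2).1, rfl⟩ l, ?_⟩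
      exact comp_lattice hΦcomp d (hS v.1 v.2).2
    have : WellFounded fun a b : S => (a : Lex (Fin n → ℝ)) < b := by
      refine Subrelation.wf
        (r := fun a b : S => ((⟨toLex (Φ (ofLex a.1)), hG a⟩ : T) : Lex (Fin n → ℝ)) <
          ((⟨toLex (Φ (ofLex b.1)), hG b⟩ : T) : Lex (Fin n → ℝ))) ?_
        (InvImage.wf (fun v : S => (⟨toLex (Φ (ofLex v.1)), hG v⟩ : T)) hTwf)
      intro a b h
      exact comp_strictMono hΦcomp h
    exact this
  refine ⟨part1, ?_⟩
  intro g hg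
  -- embed the rational support into ℝ^n
  set e : Lex (Fin n → ℚ) → Lex (Fin n → ℝ) :=
    fun v => toLex fun l => ((ofLex v l : ℚ) : ℝ) with he
  have hemono : ∀ a b : Lex (Fin n → ℚ), a < b → e a < e b := by
    intro a b hab
    obtain ⟨l, hl, hlt⟩ := hab
    refine ⟨l, fun m hm => ?_, ?_⟩
    · show ((ofLex a m : ℚ) : ℝ) = ((ofLex b m : ℚ) : ℝ)
      exact congrArg (fun q : ℚ => (q : ℝ)) (hl m hm)
    · show ((ofLex a l : ℚ) : ℝ) < ((ofLex b l : ℚ) : ℝ)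
      exact_mod_cast hlt
  have hSwf : (e '' Function.support g).IsWF := by
    apply part1
    rintro v ⟨u, hu, rfl⟩
    obtain ⟨h1, h2⟩ := hg u hu
    refine ⟨h1, fun l => ?_⟩
    obtain ⟨a, ha⟩ := h2 l
    refine ⟨a, ?_⟩
    show ((ofLex u l : ℚ) : ℝ) = (a : ℝ) / (d : ℝ)
    rw [ha]; push_cast; ring
  have hsupwf : (Function.support g).IsWF := by
    have hmem : ∀ v : Function.support g, e v.1 ∈ e '' Function.support g :=
      fun v => ⟨v.1, v.2, rfl⟩
    have : WellFounded fun a b : Function.support g => (a : Lex (Fin n → ℚ)) < b := by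
      refine Subrelation.wf
        (r := fun a b : Function.support g =>
          ((⟨e a.1, hmem a⟩ : e '' Function.support g) : Lex (Fin n → ℝ)) <
          ((⟨e b.1, hmem b⟩ : e '' Function.support g) : Lex (Fin n → ℝ))) ?_
        (InvImage.wf (fun v : Function.support g =>
          (⟨e v.1, hmem v⟩ : e '' Function.support g)) hSwf)
      intro a b h
      exact hemono _ _ h
    exact this
  have hpwo : (Function.support g).IsPWO := by
    haveI hwfFin : WellFoundedLT (Fin n) := inferInstance
    letI : LinearOrder (Lex (Fin n → ℚ)) :=
      @Pi.Lex.linearOrder (Fin n) (fun _ => ℚ) _ hwfFin _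
    exact Set.IsWF.isPWO hsupwf
  exact ⟨⟨g, hpwo⟩, fun v => rfl⟩
end
end

section
/- Let n ≥ 2 and let Φ be a finite composition of order-preserving monomial blowing-downs of ℝ^n. Then: (a) every non-zero element of Φ(ℝ_{≥0}^n) is lexicographically greater than 0 (its first non-zero component is positive); and (b) ℝ_{≥0}^n ⊆ Φ(ℝ_{≥0}^n). -/
noncomputable section

lemma lexPos_iff {n : ℕ} (x : Fin n → ℝ) :
    toLex (0 : Fin n → ℝ) < toLex x ↔ ∃ k, (∀ l, l < k → x l = 0) ∧ 0 < x k := by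
  constructor
  · rintro ⟨k, hk, hk'⟩
    exact ⟨k, fun l hl => (hk l hl).symm, hk'⟩
  · rintro ⟨k, hk, hk'⟩
    exact ⟨k, fun l hl => (hk l hl).symm, hk'⟩

lemma blowDown_lexPos {n : ℕ} {i j : Fin n} (hij : i < j) {x : Fin n → ℝ}
    (hx : toLex (0 : Fin n → ℝ) < toLex x) :
    toLex (0 : Fin n → ℝ) < toLex (blowDown n i j x) := by
  rw [lexPos_iff] at hx ⊢
  obtain ⟨k, hk, hk'⟩ := hx
  rcases lt_trichotomy j k with h | rfl | h
  · refine ⟨k, fun l hl => ?_, ?_⟩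
    · simp only [blowDown]
      rcases eq_or_ne l j with rfl | hlj
      · simp [if_pos rfl, hk l hl, hk i (hij.trans h)]
      · rw [if_neg hlj]; exact hk l hl
    · simp only [blowDown, if_neg h.ne']; exact hk'
  · refine ⟨j, fun l hl => ?_, ?_⟩
    · simp only [blowDown, if_neg hl.ne]; exact hk l hl
    · simp only [blowDown, if_pos rfl, hk i hij, sub_zero]; exact hk'
  · refine ⟨k, fun l hl => ?_, ?_⟩
    · simp only [blowDown]
      rcases eq_or_ne l j with rfl | hlj
      · exact absurd (hl.trans h) (lt_irrefl _)
      · rw [if_neg hlj]; exact hk l hl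
    · simp only [blowDown, if_neg (fun e : k = j => absurd (e ▸ h) (lt_irrefl _))]
      exact hk'

lemma blowDown_eq_zero {n : ℕ} {i j : Fin n} (hij : i ≠ j) {x : Fin n → ℝ}
    (h : blowDown n i j x = 0) : x = 0 := by
  have hi : x i = 0 := by
    have := congrFun h i
    simpa [blowDown, if_neg hij] using this
  funext l
  have := congrFun h l
  rcases eq_or_ne l j with rfl | hlj
  · simp only [blowDown, if_pos rfl, hi, sub_zero] at this; exact this
  · simpa [blowDown, if_neg hlj] using this

lemma blowDown_blowUp {n : ℕ} {i j : Fin n} (hij : i ≠ j) (w : Fin n → ℝ) :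
    blowDown n i j (blowUp n i j w) = w := by
  funext l
  simp only [blowDown, blowUp]
  rcases eq_or_ne l j with rfl | hlj
  · simp [if_neg hij]
  · simp [if_neg hlj]

/-- **(Lemma `0812061`).**  Let `n ≥ 2` and `Φ` a finite composition of order-preserving
monomial blowing-downs of `ℝ^n`.  Then (a) every non-zero element of `Φ(ℝ_{≥0}^n)` is
lexicographically greater than `0`, and (b) `ℝ_{≥0}^n ⊆ Φ(ℝ_{≥0}^n)`. -/
theorem blowDownComp_image_first_quadrant (n : ℕ) (hn : 2 ≤ n)
    (Φ : (Fin n → ℝ) → (Fin n → ℝ)) (hΦ : IsBlowDownComp n Φ) :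
    (∀ v : Fin n → ℝ, (∀ l, 0 ≤ v l) → Φ v ≠ 0 →
        toLex (0 : Fin n → ℝ) < toLex (Φ v)) ∧
    (∀ w : Fin n → ℝ, (∀ l, 0 ≤ w l) → ∃ v : Fin n → ℝ, (∀ l, 0 ≤ v l) ∧ Φ v = w) := by
  obtain ⟨L, hL, rfl⟩ := hΦ
  induction L with
  | nil =>
    constructor
    · intro v hv hne
      rw [lexPos_iff]
      simp only [List.foldr_nil, id_eq] at hne ⊢
      have : ∃ k, v k ≠ 0 := by
        by_contra h
        push_neg at h
        exact hne (funext h)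
      obtain ⟨k, hk⟩ := this
      classical
      let S := Finset.univ.filter (fun k => v k ≠ 0)
      have hS : S.Nonempty := ⟨k, by simp [S, hk]⟩
      refine ⟨S.min' hS, fun l hl => ?_, ?_⟩
      · by_contra h
        exact absurd (S.min'_le l (by simp [S, h])) (not_le.mpr hl)
      · refine lt_of_le_of_ne (hv _) (Ne.symm ?_)
        have := S.min'_mem hS
        simpa [S] using this
    · intro w hw
      exact ⟨w, hw, rfl⟩
  | cons g L ih =>
    have hg := hL g List.mem_cons_self
    obtain ⟨i, j, hij, rfl⟩ := hg
    have hL' : ∀ f ∈ L, ∃ i j : Fin n, i < j ∧ f = blowDown n i j :=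
      fun f hf => hL f (List.mem_cons_of_mem _ hf)
    obtain ⟨iha, ihb⟩ := ih hL'
    constructor
    · intro v hv hne
      simp only [List.foldr_cons, Function.comp_apply] at hne ⊢
      have hΨ : L.foldr (· ∘ ·) id v ≠ 0 := fun h => hne (by rw [h]; funext l; simp [blowDown])
      exact blowDown_lexPos hij (iha v hv hΨ)
    · intro w hw
      have hw' : ∀ l, 0 ≤ blowUp n i j w l := by
        intro l
        simp only [blowUp]
        split
        · exact add_nonneg (hw i) (hw j)
        · exact hw l
      obtain ⟨v, hv, hΨ⟩ := ihb (blowUp n i j w) hw'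
      refine ⟨v, hv, ?_⟩
      simp only [List.foldr_cons, Function.comp_apply, hΨ, blowDown_blowUp hij.ne]
end
end

section
/- Let n ≥ 2 and let Φ_1, Φ_2 be finite compositions of order-preserving monomial blowing-downs of ℝ^n, giving the S-cones Γ_1 = Φ_1(ℝ_{≥0}^n) and Γ_2 = Φ_2(ℝ_{≥0}^n). Then there exists a finite composition Φ of order-preserving monomial blowing-downs such that Γ_1 ⊆ Φ(ℝ_{≥0}^n) and Γ_2 ⊆ Φ(ℝ_{≥0}^n). -/
noncomputable section

namespace SConeAux

open Matrix

abbrev Mat (n : ℕ) := Matrix (Fin n) (Fin n) ℝ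

def Umat (n : ℕ) (i j : Fin n) : Mat n := 1 + Matrix.single j i (1:ℝ)
def Dmat (n : ℕ) (i j : Fin n) : Mat n := 1 - Matrix.single j i (1:ℝ)

/-- lower unitriangular -/
def LU {n : ℕ} (M : Mat n) : Prop :=
  (∀ r c : Fin n, r < c → M r c = 0) ∧ ∀ r, M r r = 1

/-- nonnegative entries -/
def NN {n : ℕ} (M : Mat n) : Prop := ∀ r c, 0 ≤ M r c

lemma LU_one {n : ℕ} : LU (1 : Mat n) :=
  ⟨fun r c h => Matrix.one_apply_ne (ne_of_lt h), fun r => Matrix.one_apply_eq r⟩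

lemma LU_mul {n : ℕ} {A B : Mat n} (hA : LU A) (hB : LU B) : LU (A * B) := by
  constructor
  · intro r c h
    rw [Matrix.mul_apply]
    apply Finset.sum_eq_zero
    intro s _
    rcases lt_or_ge r s with hs | hs
    · rw [hA.1 r s hs, zero_mul]
    · rw [hB.1 s c (lt_of_le_of_lt hs h), mul_zero]
  · intro r
    rw [Matrix.mul_apply, Finset.sum_eq_single r]
    · rw [hA.2, hB.2, one_mul]
    · intro s _ hs
      rcases lt_or_gt_of_ne hs with h | h
      · rw [hB.1 s r h, mul_zero]
      · rw [hA.1 r s h, zero_mul]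
    · intro h; exact absurd (Finset.mem_univ r) h

lemma LU_Umat {n : ℕ} {i j : Fin n} (hij : i < j) : LU (Umat n i j) := by
  constructor
  · intro r c h
    have : Matrix.single j i (1:ℝ) r c = 0 := by
      apply Matrix.single_apply_of_ne
      rintro ⟨rfl, rfl⟩
      exact absurd h (not_lt_of_gt hij)
    simp [Umat, this, Matrix.one_apply_ne (ne_of_lt h)]
  · intro r
    have : Matrix.single j i (1:ℝ) r r = 0 := by
      apply Matrix.single_apply_of_ne
      rintro ⟨rfl, rfl⟩
      exact absurd rfl (ne_of_gt hij)
    simp [Umat, this]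

lemma LU_Dmat {n : ℕ} {i j : Fin n} (hij : i < j) : LU (Dmat n i j) := by
  constructor
  · intro r c h
    have : Matrix.single j i (1:ℝ) r c = 0 := by
      apply Matrix.single_apply_of_ne
      rintro ⟨rfl, rfl⟩
      exact absurd h (not_lt_of_gt hij)
    simp [Dmat, this, Matrix.one_apply_ne (ne_of_lt h)]
  · intro r
    have : Matrix.single j i (1:ℝ) r r = 0 := by
      apply Matrix.single_apply_of_ne
      rintro ⟨rfl, rfl⟩
      exact absurd rfl (ne_of_gt hij)
    simp [Dmat, this]

/-- product of the `Umat`s of a list of index pairs -/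
def Uprod (n : ℕ) (l : List (Fin n × Fin n)) : Mat n :=
  (l.map fun p => Umat n p.1 p.2).prod

lemma Uprod_nil (n : ℕ) : Uprod n [] = 1 := rfl

lemma Uprod_cons (n : ℕ) (p : Fin n × Fin n) (l : List (Fin n × Fin n)) :
    Uprod n (p :: l) = Umat n p.1 p.2 * Uprod n l := by
  simp [Uprod]

lemma Uprod_append (n : ℕ) (l₁ l₂ : List (Fin n × Fin n)) :
    Uprod n (l₁ ++ l₂) = Uprod n l₁ * Uprod n l₂ := by
  simp [Uprod]

lemma LU_Uprod {n : ℕ} {l : List (Fin n × Fin n)} (h : ∀ p ∈ l, p.1 < p.2) :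
    LU (Uprod n l) := by
  induction l with
  | nil => exact LU_one
  | cons p l ih =>
    rw [Uprod_cons]
    exact LU_mul (LU_Umat (h p (List.mem_cons_self))) (ih fun q hq => h q (List.mem_cons_of_mem p hq))

lemma blowUp_eq_mulVec (n : ℕ) {i j : Fin n} (hij : i ≠ j) :
    blowUp n i j = (Umat n i j).mulVec := by
  funext a l
  rw [Umat, Matrix.add_mulVec, Matrix.one_mulVec]
  have : (Matrix.single j i (1:ℝ)).mulVec a l = if l = j then a i else 0 := by
    rw [Matrix.mulVec, dotProduct]
    by_cases h : l = j
    · subst h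
      rw [if_pos rfl, Finset.sum_eq_single i]
      · simp
      · intro s _ hs
        rw [Matrix.single_apply_of_ne, zero_mul]
        rintro ⟨_, rfl⟩; exact hs rfl
      · intro h; exact absurd (Finset.mem_univ i) h
    · rw [if_neg h]
      apply Finset.sum_eq_zero
      intro s _
      rw [Matrix.single_apply_of_ne, zero_mul]
      rintro ⟨rfl, _⟩; exact h rfl
  rw [blowUp]
  by_cases h : l = j
  · subst h; simp [this, Pi.add_apply, add_comm]
  · simp [this, h]

lemma blowDown_eq_mulVec (n : ℕ) {i j : Fin n} (hij : i ≠ j) :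
    blowDown n i j = (Dmat n i j).mulVec := by
  funext a l
  rw [Dmat, Matrix.sub_mulVec, Matrix.one_mulVec]
  have : (Matrix.single j i (1:ℝ)).mulVec a l = if l = j then a i else 0 := by
    rw [Matrix.mulVec, dotProduct]
    by_cases h : l = j
    · subst h
      rw [if_pos rfl, Finset.sum_eq_single i]
      · simp
      · intro s _ hs
        rw [Matrix.single_apply_of_ne, zero_mul]
        rintro ⟨_, rfl⟩; exact hs rfl
      · intro h; exact absurd (Finset.mem_univ i) h
    · rw [if_neg h]
      apply Finset.sum_eq_zero
      intro s _
      rw [Matrix.single_apply_of_ne, zero_mul]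
      rintro ⟨rfl, _⟩; exact h rfl
  rw [blowDown]
  by_cases h : l = j
  · subst h; simp [this]
  · simp [this, h]

lemma blowDown_comp_blowUp (n : ℕ) {i j : Fin n} (hij : i ≠ j) :
    blowDown n i j ∘ blowUp n i j = id := by
  funext a l
  simp only [Function.comp_apply, id_eq, blowDown, blowUp]
  by_cases h : l = j
  · subst h
    rw [if_pos rfl, if_pos rfl, if_neg hij]
    ring
  · rw [if_neg h, if_neg h]

/-- fold of the blow-up maps of a list of pairs -/
def Ufold (n : ℕ) (l : List (Fin n × Fin n)) : (Fin n → ℝ) → (Fin n → ℝ) :=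
  (l.map fun p => blowUp n p.1 p.2).foldr (· ∘ ·) id

/-- fold of the blow-down maps of a list of pairs -/
def Dfold (n : ℕ) (l : List (Fin n × Fin n)) : (Fin n → ℝ) → (Fin n → ℝ) :=
  (l.map fun p => blowDown n p.1 p.2).foldr (· ∘ ·) id

lemma foldr_comp_append {α : Type*} (L₁ L₂ : List ((α → α))) :
    (L₁ ++ L₂).foldr (· ∘ ·) id = L₁.foldr (· ∘ ·) id ∘ L₂.foldr (· ∘ ·) id := by
  induction L₁ with
  | nil => simp
  | cons g L ih => simp [List.foldr_cons, ih, Function.comp_assoc]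

lemma Dfold_append (n : ℕ) (l₁ l₂ : List (Fin n × Fin n)) :
    Dfold n (l₁ ++ l₂) = Dfold n l₁ ∘ Dfold n l₂ := by
  rw [Dfold, List.map_append, foldr_comp_append]; rfl

lemma Ufold_eq_mulVec (n : ℕ) (l : List (Fin n × Fin n)) (h : ∀ p ∈ l, p.1 ≠ p.2) :
    Ufold n l = (Uprod n l).mulVec := by
  induction l with
  | nil =>
    funext a
    rw [Uprod_nil, Matrix.one_mulVec]; rfl
  | cons p l ih =>
    have h1 : Ufold n (p :: l) = blowUp n p.1 p.2 ∘ Ufold n l := rfl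
    rw [h1, ih (fun q hq => h q (List.mem_cons_of_mem p hq)),
      blowUp_eq_mulVec n (h p (List.mem_cons_self)), Uprod_cons]
    funext a
    simp [Matrix.mulVec_mulVec]

lemma Dfold_reverse_comp_Ufold (n : ℕ) (l : List (Fin n × Fin n))
    (h : ∀ p ∈ l, p.1 ≠ p.2) :
    Dfold n l.reverse ∘ Ufold n l = id := by
  induction l with
  | nil => rfl
  | cons p l ih =>
    have h1 : Ufold n (p :: l) = blowUp n p.1 p.2 ∘ Ufold n l := rfl
    have h2 : (p :: l).reverse = l.reverse ++ [p] := by simp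
    rw [h1, h2, Dfold_append]
    have h3 : Dfold n [p] = blowDown n p.1 p.2 := by
      funext a; rfl
    rw [h3]
    have h4 := blowDown_comp_blowUp n (h p (List.mem_cons_self))
    calc (Dfold n l.reverse ∘ blowDown n p.1 p.2) ∘ (blowUp n p.1 p.2 ∘ Ufold n l)
        = Dfold n l.reverse ∘ (blowDown n p.1 p.2 ∘ blowUp n p.1 p.2) ∘ Ufold n l := by
          simp [Function.comp_assoc]
      _ = Dfold n l.reverse ∘ Ufold n l := by rw [h4]; simp
      _ = id := ih (fun q hq => h q (List.mem_cons_of_mem p hq))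

/-- representation of a blow-down composition by a lower unitriangular matrix -/
lemma rep_of_isBlowDownComp {n : ℕ} {Φ : (Fin n → ℝ) → (Fin n → ℝ)}
    (h : IsBlowDownComp n Φ) : ∃ M : Mat n, LU M ∧ Φ = M.mulVec := by
  obtain ⟨L, hL, rfl⟩ := h
  induction L with
  | nil =>
    refine ⟨1, LU_one, ?_⟩
    funext a
    rw [Matrix.one_mulVec]; rfl
  | cons g L ih =>
    obtain ⟨M, hM, hMe⟩ := ih (fun f hf => hL f (List.mem_cons_of_mem g hf))
    obtain ⟨i, j, hij, rfl⟩ := hL g (List.mem_cons_self)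
    refine ⟨Dmat n i j * M, LU_mul (LU_Dmat hij) hM, ?_⟩
    have : (blowDown n i j :: L).foldr (· ∘ ·) id = blowDown n i j ∘ L.foldr (· ∘ ·) id := rfl
    rw [this, hMe, blowDown_eq_mulVec n (ne_of_lt hij)]
    funext a
    simp [Matrix.mulVec_mulVec]

/-- the first `k` rows are nonnegative -/
def RowsNN {n : ℕ} (M : Mat n) (k : ℕ) : Prop :=
  ∀ r c : Fin n, (r : ℕ) < k → 0 ≤ M r c

/-- row `j` is nonnegative from column `c₀` on -/
def RowFrom {n : ℕ} (M : Mat n) (j : Fin n) (c₀ : ℕ) : Prop :=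
  ∀ c : Fin n, c₀ ≤ (c : ℕ) → 0 ≤ M j c

lemma LU_pow {n : ℕ} {M : Mat n} (h : LU M) (m : ℕ) : LU (M ^ m) := by
  induction m with
  | zero => simpa using LU_one
  | succ m ih => rw [pow_succ]; exact LU_mul ih h

lemma Umat_pow {n : ℕ} {i j : Fin n} (hij : i ≠ j) (m : ℕ) :
    (Umat n i j) ^ m = 1 + (m : ℝ) • Matrix.single j i (1:ℝ) := by
  induction m with
  | zero => simp
  | succ m ih =>
    have hEE : Matrix.single j i (1:ℝ) * Matrix.single j i (1:ℝ) = 0 :=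
      Matrix.single_mul_single_of_ne 1 j i j hij 1
    rw [pow_succ, ih, Umat]
    rw [mul_add, add_mul, add_mul, one_mul, mul_one, smul_mul_assoc, hEE, smul_zero]
    push_cast
    rw [add_smul, one_smul, one_mul]
    abel

lemma step_apply {n : ℕ} {i j : Fin n} (hij : i ≠ j) (m : ℕ) (M : Mat n) (r c : Fin n) :
    ((Umat n i j) ^ m * M) r c = M r c + (if r = j then (m : ℝ) * M i c else 0) := by
  rw [Umat_pow hij, add_mul, one_mul, smul_mul_assoc, Matrix.add_apply, Matrix.smul_apply]
  by_cases h : r = j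
  · subst h
    rw [if_pos rfl, Matrix.single_mul_apply_same, one_mul, smul_eq_mul]
  · rw [if_neg h, Matrix.single_mul_apply_of_ne 1 j i r c h M, smul_zero]

lemma inner_step {n : ℕ} (j : Fin n) :
    ∀ t : ℕ, ∀ M₁ M₂ : Mat n, LU M₁ → LU M₂ →
      RowsNN M₁ (j : ℕ) → RowsNN M₂ (j : ℕ) →
      ∃ l : List (Fin n × Fin n), (∀ p ∈ l, p.1 < p.2) ∧
        (LU (Uprod n l * M₁) ∧ RowsNN (Uprod n l * M₁) (j : ℕ) ∧
          RowFrom (Uprod n l * M₁) j ((j : ℕ) - t)) ∧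
        (LU (Uprod n l * M₂) ∧ RowsNN (Uprod n l * M₂) (j : ℕ) ∧
          RowFrom (Uprod n l * M₂) j ((j : ℕ) - t)) := by
  intro t
  induction t with
  | zero =>
    intro M₁ M₂ h₁ h₂ hr₁ hr₂
    refine ⟨[], by simp, ?_, ?_⟩ <;>
    · rw [Uprod_nil, one_mul]
      refine ⟨by assumption, by assumption, ?_⟩
      intro c hc
      rcases eq_or_lt_of_le hc with h | h
      · have : c = j := Fin.ext h.symm
        subst this
        first
        | (rw [h₁.2]; norm_num)
        | (rw [h₂.2]; norm_num)
      · have hjc : j < c := by rwa [Fin.lt_def]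
        first
        | (rw [h₁.1 j c hjc])
        | (rw [h₂.1 j c hjc])
  | succ t ih =>
    intro M₁ M₂ h₁ h₂ hr₁ hr₂
    obtain ⟨l, hl, ⟨hA₁, hB₁, hC₁⟩, ⟨hA₂, hB₂, hC₂⟩⟩ := ih M₁ M₂ h₁ h₂ hr₁ hr₂
    rcases le_or_gt (j : ℕ) t with hjt | htj
    · refine ⟨l, hl, ⟨hA₁, hB₁, ?_⟩, ⟨hA₂, hB₂, ?_⟩⟩ <;>
      · rw [Nat.sub_eq_zero_of_le (le_trans hjt (Nat.le_succ t))]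
        first
        | (have := hC₁; rwa [Nat.sub_eq_zero_of_le hjt] at this)
        | (have := hC₂; rwa [Nat.sub_eq_zero_of_le hjt] at this)
    · -- t < j, so we must fix column c₀ = j - (t+1)
      set A₁ := Uprod n l * M₁ with hA₁def
      set A₂ := Uprod n l * M₂ with hA₂def
      have hc₀n : (j : ℕ) - (t + 1) < n := lt_of_le_of_lt (Nat.sub_le _ _) j.isLt
      set cF : Fin n := ⟨(j : ℕ) - (t + 1), hc₀n⟩ with hcF
      have hcFj : cF < j := by
        rw [Fin.lt_def]
        show (j : ℕ) - (t + 1) < (j : ℕ)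
        omega
      have hcFne : cF ≠ j := ne_of_lt hcFj
      obtain ⟨m, hm⟩ := exists_nat_ge (max (-(A₁ j cF)) (-(A₂ j cF)))
      have hm₁ : -(A₁ j cF) ≤ (m : ℝ) := le_trans (le_max_left _ _) hm
      have hm₂ : -(A₂ j cF) ≤ (m : ℝ) := le_trans (le_max_right _ _) hm
      refine ⟨List.replicate m (cF, j) ++ l, ?_, ?_, ?_⟩
      · intro p hp
        rcases List.mem_append.mp hp with h | h
        · rw [List.eq_of_mem_replicate h]; exact hcFj
        · exact hl p h
      all_goals
        rw [Uprod_append, mul_assoc]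
        have hUr : Uprod n (List.replicate m (cF, j)) = (Umat n cF j) ^ m := by
          rw [Uprod, List.map_replicate, List.prod_replicate]
        rw [hUr]
      -- now the two goals for A₁ and A₂
      · rw [← hA₁def]
        refine ⟨LU_mul (LU_pow (LU_Umat hcFj) m) hA₁, ?_, ?_⟩
        · intro r c hr
          rw [step_apply hcFne, if_neg (by intro h; subst h; omega)]
          simpa using hB₁ r c hr
        · intro c hc
          rw [step_apply hcFne, if_pos rfl]
          rcases eq_or_lt_of_le hc with h | h
          · have : c = cF := Fin.ext h.symm
            subst this
            rw [hA₁.2 cF, mul_one]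
            linarith
          · have hrow : 0 ≤ A₁ j c := hC₁ c (by omega)
            have hcol : 0 ≤ A₁ cF c := hB₁ cF c (by exact (by omega : ((j:ℕ) - (t+1)) < (j:ℕ)))
            positivity
      · rw [← hA₂def]
        refine ⟨LU_mul (LU_pow (LU_Umat hcFj) m) hA₂, ?_, ?_⟩
        · intro r c hr
          rw [step_apply hcFne, if_neg (by intro h; subst h; omega)]
          simpa using hB₂ r c hr
        · intro c hc
          rw [step_apply hcFne, if_pos rfl]
          rcases eq_or_lt_of_le hc with h | h
          · have : c = cF := Fin.ext h.symm
            subst this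
            rw [hA₂.2 cF, mul_one]
            linarith
          · have hrow : 0 ≤ A₂ j c := hC₂ c (by omega)
            have hcol : 0 ≤ A₂ cF c := hB₂ cF c (by exact (by omega : ((j:ℕ) - (t+1)) < (j:ℕ)))
            positivity

lemma outer_step {n : ℕ} :
    ∀ m : ℕ, ∀ M₁ M₂ : Mat n, LU M₁ → LU M₂ →
      RowsNN M₁ (n - m) → RowsNN M₂ (n - m) →
      ∃ l : List (Fin n × Fin n), (∀ p ∈ l, p.1 < p.2) ∧
        NN (Uprod n l * M₁) ∧ NN (Uprod n l * M₂) := by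
  intro m
  induction m with
  | zero =>
    intro M₁ M₂ h₁ h₂ hr₁ hr₂
    refine ⟨[], by simp, ?_, ?_⟩ <;>
    · rw [Uprod_nil, one_mul]
      intro r c
      first
      | exact hr₁ r c (by omega)
      | exact hr₂ r c (by omega)
  | succ m ih =>
    intro M₁ M₂ h₁ h₂ hr₁ hr₂
    rcases le_or_gt n m with hnm | hmn
    · exact ih M₁ M₂ h₁ h₂
        (fun r c hr => absurd hr (by omega))
        (fun r c hr => absurd hr (by omega))
    · have hjn : n - (m + 1) < n := by omega
      set j : Fin n := ⟨n - (m + 1), hjn⟩ with hj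
      have hr₁' : RowsNN M₁ (j : ℕ) := hr₁
      have hr₂' : RowsNN M₂ (j : ℕ) := hr₂
      obtain ⟨l₁, hl₁, ⟨hA₁, hB₁, hC₁⟩, ⟨hA₂, hB₂, hC₂⟩⟩ :=
        inner_step j (j : ℕ) M₁ M₂ h₁ h₂ hr₁' hr₂'
      have hfull₁ : RowsNN (Uprod n l₁ * M₁) (n - m) := by
        intro r c hr
        rcases lt_or_ge (r : ℕ) (j : ℕ) with h | h
        · exact hB₁ r c h
        · have hjval : (j : ℕ) = n - (m + 1) := rfl
          have : r = j := Fin.ext (by omega)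
          subst this
          exact hC₁ c (by omega)
      have hfull₂ : RowsNN (Uprod n l₁ * M₂) (n - m) := by
        intro r c hr
        rcases lt_or_ge (r : ℕ) (j : ℕ) with h | h
        · exact hB₂ r c h
        · have hjval : (j : ℕ) = n - (m + 1) := rfl
          have : r = j := Fin.ext (by omega)
          subst this
          exact hC₂ c (by omega)
      obtain ⟨l₂, hl₂, hN₁, hN₂⟩ := ih _ _ hA₁ hA₂ hfull₁ hfull₂
      refine ⟨l₂ ++ l₁, ?_, ?_, ?_⟩
      · intro p hp
        rcases List.mem_append.mp hp with h | h
        · exact hl₂ p h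
        · exact hl₁ p h
      · rw [Uprod_append, mul_assoc]; exact hN₁
      · rw [Uprod_append, mul_assoc]; exact hN₂

end SConeAux

open SConeAux in
/-- **(Lemma `star`).**  Let `n ≥ 2` and let `Φ₁, Φ₂` be finite compositions of
order-preserving monomial blowing-downs of `ℝ^n`, giving the `S`-cones
`Γ₁ = Φ₁(ℝ_{≥0}^n)` and `Γ₂ = Φ₂(ℝ_{≥0}^n)`.  Then there is a finite composition `Φ`
of order-preserving monomial blowing-downs with `Γ₁ ⊆ Φ(ℝ_{≥0}^n)` and
`Γ₂ ⊆ Φ(ℝ_{≥0}^n)`. -/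
theorem exists_common_sCone (n : ℕ) (hn : 2 ≤ n)
    (Φ₁ Φ₂ : (Fin n → ℝ) → (Fin n → ℝ))
    (h₁ : IsBlowDownComp n Φ₁) (h₂ : IsBlowDownComp n Φ₂) :
    ∃ Φ : (Fin n → ℝ) → (Fin n → ℝ), IsBlowDownComp n Φ ∧
      Φ₁ '' {v | ∀ l, 0 ≤ v l} ⊆ Φ '' {v | ∀ l, 0 ≤ v l} ∧
      Φ₂ '' {v | ∀ l, 0 ≤ v l} ⊆ Φ '' {v | ∀ l, 0 ≤ v l} := by
  obtain ⟨M₁, hM₁, hΦ₁⟩ := rep_of_isBlowDownComp h₁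
  obtain ⟨M₂, hM₂, hΦ₂⟩ := rep_of_isBlowDownComp h₂
  obtain ⟨l, hl, hN₁, hN₂⟩ := outer_step n M₁ M₂ hM₁ hM₂
    (fun r c hr => absurd hr (by omega)) (fun r c hr => absurd hr (by omega))
  have hlne : ∀ p ∈ l, p.1 ≠ p.2 := fun p hp => ne_of_lt (hl p hp)
  refine ⟨Dfold n l.reverse, ?_, ?_, ?_⟩
  · refine ⟨l.reverse.map fun p => blowDown n p.1 p.2, ?_, ?_⟩
    · intro g hg
      obtain ⟨p, hp, rfl⟩ := List.mem_map.mp hg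
      exact ⟨p.1, p.2, hl p (List.mem_reverse.mp hp), rfl⟩
    · rfl
  · rintro y ⟨v, hv, rfl⟩
    refine ⟨(Uprod n l).mulVec (Φ₁ v), ?_, ?_⟩
    · intro l0
      rw [hΦ₁, Matrix.mulVec_mulVec]
      simp only [Matrix.mulVec, dotProduct]
      exact Finset.sum_nonneg fun c _ => mul_nonneg (hN₁ l0 c) (hv c)
    · have hid := congrFun (Dfold_reverse_comp_Ufold n l hlne) (Φ₁ v)
      rw [Ufold_eq_mulVec n l hlne] at hid
      exact hid
  · rintro y ⟨v, hv, rfl⟩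
    refine ⟨(Uprod n l).mulVec (Φ₂ v), ?_, ?_⟩
    · intro l0
      rw [hΦ₂, Matrix.mulVec_mulVec]
      simp only [Matrix.mulVec, dotProduct]
      exact Finset.sum_nonneg fun c _ => mul_nonneg (hN₂ l0 c) (hv c)
    · have hid := congrFun (Dfold_reverse_comp_Ufold n l hlne) (Φ₂ v)
      rw [Ufold_eq_mulVec n l hlne] at hid
      exact hid
end
end

section
/- Let n ≥ 2 and let A be an n×n integer matrix with all diagonal entries equal to 1 and all entries below the diagonal equal to 0 (a unipotent upper-triangular integer matrix). Then A is a finite product of elementary matrices E_{ij}(1) with i < j if and only if all entries of A are non-negative. -/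
open Matrix Finset

private lemma list_prod_entries_nonneg (n : ℕ) (L : List (Matrix (Fin n) (Fin n) ℤ))
    (h : ∀ B ∈ L, ∀ i j, (0:ℤ) ≤ B i j) : ∀ i j, 0 ≤ L.prod i j := by
  induction L with
  | nil =>
    intro i j
    rw [List.prod_nil]
    by_cases hij : i = j <;> simp [Matrix.one_apply, hij]
  | cons B L ih =>
    intro i j
    rw [List.prod_cons, Matrix.mul_apply]
    exact Finset.sum_nonneg fun k _ =>
      mul_nonneg (h B (by simp) i k) (ih (fun C hC => h C (by simp [hC])) k j)

private lemma unipotent_aux (n : ℕ) : ∀ m : ℕ, ∀ A : Matrix (Fin n) (Fin n) ℤ,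
    (∀ i, A i i = 1) → (∀ i j : Fin n, j < i → A i j = 0) → (∀ i j, 0 ≤ A i j) →
    (∑ r, ∑ k, A r k).toNat ≤ m →
    ∃ L : List (Matrix (Fin n) (Fin n) ℤ),
      (∀ B ∈ L, ∃ i j : Fin n, i < j ∧ B = 1 + Matrix.single i j 1) ∧
      A = L.prod := by
  intro m
  induction m using Nat.strong_induction_on with
  | _ m ih =>
    intro A hdiag hlow hnn hm
    by_cases h0 : ∀ i j : Fin n, i < j → A i j = 0
    · refine ⟨[], by simp, ?_⟩
      rw [List.prod_nil]
      ext r k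
      rcases lt_trichotomy r k with h | h | h
      · rw [h0 r k h, Matrix.one_apply_ne h.ne]
      · rw [h, hdiag, Matrix.one_apply_eq]
      · rw [hlow r k h, Matrix.one_apply_ne h.ne']
    · push_neg at h0
      obtain ⟨i0, j0, hij0, hne0⟩ := h0
      classical
      set s : Finset (Fin n) :=
        Finset.univ.filter (fun r : Fin n => ∃ c, r < c ∧ 0 < A r c) with hs
      have hsne : s.Nonempty := by
        refine ⟨i0, ?_⟩
        simp only [hs, Finset.mem_filter, Finset.mem_univ, true_and]
        exact ⟨j0, hij0, lt_of_le_of_ne (hnn i0 j0) (Ne.symm hne0)⟩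
      set i : Fin n := s.max' hsne with hi
      obtain ⟨j, hij, hpos⟩ : ∃ c, i < c ∧ 0 < A i c := by
        have hmem : i ∈ s := s.max'_mem hsne
        simp only [hs, Finset.mem_filter, Finset.mem_univ, true_and] at hmem
        exact hmem
      -- rows below i are trivial
      have rowtriv : ∀ r k : Fin n, i < r → A r k = if k = r then 1 else 0 := by
        intro r k hr
        rcases lt_trichotomy k r with h | h | h
        · rw [hlow r k h, if_neg h.ne]
        · rw [h, hdiag, if_pos rfl]
        · rw [if_neg h.ne']
          by_contra hc
          have hrs : r ∈ s := by
            simp only [hs, Finset.mem_filter, Finset.mem_univ, true_and]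
            exact ⟨k, h, lt_of_le_of_ne (hnn r k) (Ne.symm hc)⟩
          exact absurd (s.le_max' r hrs) (not_le.mpr hr)
      set A' : Matrix (Fin n) (Fin n) ℤ :=
        fun r k => A r k - if r = i ∧ k = j then 1 else 0 with hA'
      have hA'app : ∀ r k, A' r k = A r k - if r = i ∧ k = j then 1 else 0 :=
        fun r k => rfl
      have hdiag' : ∀ r, A' r r = 1 := by
        intro r
        rw [hA'app, hdiag, if_neg, sub_zero]
        rintro ⟨h1, h2⟩
        exact absurd (h1 ▸ h2 : (i:Fin n) = j) hij.ne
      have hlow' : ∀ r k : Fin n, k < r → A' r k = 0 := by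
        intro r k hkr
        rw [hA'app, hlow r k hkr, if_neg, sub_zero]
        rintro ⟨h1, h2⟩
        exact absurd (h2 ▸ h1 ▸ hkr : j < i) (not_lt.mpr hij.le)
      have hnn' : ∀ r k, 0 ≤ A' r k := by
        intro r k
        rw [hA'app]
        by_cases h : r = i ∧ k = j
        · rw [if_pos h, h.1, h.2]; omega
        · rw [if_neg h, sub_zero]; exact hnn r k
      have key : (∑ r : Fin n, ∑ k : Fin n, (if r = i ∧ k = j then (1:ℤ) else 0)) = 1 := by
        have h1 : ∀ r : Fin n,
            (∑ k : Fin n, (if r = i ∧ k = j then (1:ℤ) else 0)) = if r = i then 1 else 0 := by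
          intro r
          by_cases hr : r = i <;> simp [hr]
        simp [h1]
      have hsum' : (∑ r, ∑ k, A' r k) = (∑ r, ∑ k, A r k) - 1 := by
        simp only [hA'app, Finset.sum_sub_distrib]
        rw [key]
      have hAij1 : 1 ≤ A i j := hpos
      have hsumge : A i j ≤ ∑ r, ∑ k, A r k := by
        calc A i j ≤ ∑ k, A i k :=
              Finset.single_le_sum (fun k _ => hnn i k) (Finset.mem_univ j)
          _ ≤ ∑ r, ∑ k, A r k :=
              Finset.single_le_sum (fun r _ => Finset.sum_nonneg fun k _ => hnn r k)
                (Finset.mem_univ i)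
      have hlt : (∑ r, ∑ k, A' r k).toNat < m := by
        rw [hsum']; omega
      obtain ⟨L', hL', hprod⟩ :=
        ih _ hlt A' hdiag' hlow' hnn' le_rfl
      refine ⟨(1 + Matrix.single i j 1) :: L', ?_, ?_⟩
      · intro B hB
        rcases List.mem_cons.mp hB with h | h
        · exact ⟨i, j, hij, h⟩
        · exact hL' B h
      · rw [List.prod_cons, ← hprod]
        ext r k
        rw [Matrix.add_mul, Matrix.one_mul, Matrix.add_apply]
        by_cases hr : r = i
        · rw [hr, Matrix.single_mul_apply_same, one_mul, hA'app, hA'app,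
            rowtriv j k hij]
          rcases eq_or_ne k j with hk | hk <;> simp [hk, hij.ne']
        · simp [hr, hA'app]

/-- **(Remark `0812062`).**  Let `n ≥ 2` and let `A` be a unipotent upper-triangular
`n × n` integer matrix (all diagonal entries `1`, all entries below the diagonal `0`).
Then `A` is a finite product of elementary matrices `E_{ij}(1)` with `i < j` (the matrices
of the order-preserving monomial blowing-ups) if and only if all entries of `A` are
non-negative. -/
theorem unipotent_prod_elementary_iff_nonneg_entries
    (n : ℕ) (hn : 2 ≤ n) (A : Matrix (Fin n) (Fin n) ℤ)
    (hdiag : ∀ i, A i i = 1) (hlow : ∀ i j : Fin n, j < i → A i j = 0) :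
    (∃ L : List (Matrix (Fin n) (Fin n) ℤ),
        (∀ B ∈ L, ∃ i j : Fin n, i < j ∧ B = 1 + Matrix.single i j 1) ∧
        A = L.prod) ↔
      (∀ i j, 0 ≤ A i j) := by
  constructor
  · rintro ⟨L, hL, rfl⟩
    apply list_prod_entries_nonneg
    intro B hB a b
    obtain ⟨i, j, hij, rfl⟩ := hL B hB
    rw [Matrix.add_apply]
    have h1 : (0:ℤ) ≤ (1 : Matrix (Fin n) (Fin n) ℤ) a b := by
      by_cases h : a = b <;> simp [Matrix.one_apply, h]
    have h2 : (0:ℤ) ≤ Matrix.single i j 1 a b := by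
      by_cases h : i = a ∧ j = b <;> simp [Matrix.single, h] <;> positivity
    exact add_nonneg h1 h2
  · intro hnn
    exact unipotent_aux n _ A hdiag hlow hnn le_rfl
end
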